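/- arXiv:1908.02718 — 6 statements merged into one kernel-verified Lean document; each statement's English description precedes it below -/
import Mathlib

section
/- For any target value θ ∈ ℝ, the mean squared error of the bagged estimator has the form MSE(θ̃) = F/N + G, where F = E_L[Var_U(θ̂(L_U))] ≥ 0 and G = Var_L(E_U[θ̂(L_U)]) + (E_L[E_U[θ̂(L_U)]] − θ)^2 ≥ 0 are independent of N. In particular, MSE(θ̃) is nonincreasing in N. -/
open MeasureTheory ProbabilityTheory
open scoped ENNReal

/-- The uniform probability measure on the `n^m` sampling-with-replacement maps
`{1,…,m} → {1,…,n}`. -/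
noncomputable def unif (n m : ℕ) [NeZero n] : Measure (Fin m → Fin n) :=
  (PMF.uniformOfFintype (Fin m → Fin n)).toMeasure

/-- The MSE of the bagged estimator with `N` iterations, for target `θ`. -/
noncomputable def baggedMSE {Ω : Type*} [MeasurableSpace Ω] (μ : Measure Ω)
    (n m : ℕ) [NeZero n] (X : Fin n → Ω → ℝ) (θhat : (Fin m → ℝ) → ℝ) (θ : ℝ)
    (N : ℕ) : ℝ :=
  ∫ p : Ω × (Fin N → (Fin m → Fin n)),
      ((N : ℝ)⁻¹ * ∑ i : Fin N, θhat (fun j => X (p.2 i j) p.1) - θ) ^ 2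
      ∂(μ.prod (Measure.pi fun _ : Fin N => unif n m))


lemma prod_smul_right_aux {Ω β : Type*} [MeasurableSpace Ω] [MeasurableSpace β]
    (μ : Measure Ω) [SFinite μ] (ν : Measure β) [SFinite ν] (c : ℝ≥0∞) (hc : c ≠ ∞) :
    μ.prod (c • ν) = c • μ.prod ν := by
  ext s hs
  rw [Measure.smul_apply, Measure.prod_apply hs, Measure.prod_apply hs, smul_eq_mul,
    ← lintegral_const_mul' _ _ hc]
  simp [Measure.smul_apply]

lemma integral_prod_finite {Ω β : Type*} [MeasurableSpace Ω] [MeasurableSpace β]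
    [Fintype β] [MeasurableSingletonClass β]
    (μ : Measure Ω) [SFinite μ] (π : Measure β) [IsFiniteMeasure π]
    (g : Ω → β → ℝ) (hint : ∀ b, Integrable (fun ω => g ω b) μ) :
    ∫ p : Ω × β, g p.1 p.2 ∂(μ.prod π) = ∑ b, (π {b}).toReal * ∫ ω, g ω b ∂μ := by
  have hprod : μ.prod π = Measure.sum (fun b : β => π {b} • (μ.map (fun ω => (ω, b)))) := by
    conv_lhs => rw [← Measure.sum_smul_dirac π, Measure.prod_sum_right]
    congr 1
    funext b
    rw [prod_smul_right_aux μ _ _ (measure_ne_top π _), Measure.prod_dirac]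
  have hib : ∀ b : β, Integrable (fun p : Ω × β => g p.1 p.2)
      (π {b} • μ.map (fun ω => (ω, b))) := by
    intro b
    refine Integrable.smul_measure ?_ (measure_ne_top π _)
    exact (measurableEmbedding_prod_mk_right b).integrable_map_iff.2 (hint b)
  rw [hprod, Measure.sum_fintype, integral_finset_sum_measure (fun b _ => hib b)]
  refine Finset.sum_congr rfl fun b _ => ?_
  rw [integral_smul_measure, (measurableEmbedding_prod_mk_right b).integral_map]
  simp

lemma sum_pi_fin_succ {K : Type*} [Fintype K] {N : ℕ} (f : (Fin (N+1) → K) → ℝ) :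
    ∑ v : Fin (N+1) → K, f v = ∑ x : K, ∑ w : Fin N → K, f (Fin.cons x w) := by
  rw [← (Fin.consEquiv fun _ => K).sum_comp f, Fintype.sum_prod_type]
  rfl

lemma sumU {K : Type*} [Fintype K] (b : K → ℝ) :
    ∀ N : ℕ, (∑ v : Fin N → K, ∑ i, b (v i)) * (Fintype.card K : ℝ)
      = N * (Fintype.card K : ℝ) ^ N * ∑ u, b u := by
  intro N
  induction N with
  | zero => simp
  | succ N ih =>
    set k : ℝ := (Fintype.card K : ℝ) with hk
    have h1 : ∀ (x : K) (w : Fin N → K),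
        ∑ i : Fin (N+1), b ((Fin.cons x w : Fin (N+1) → K) i) = b x + ∑ i, b (w i) := by
      intro x w; rw [Fin.sum_univ_succ]; simp
    have e1 : ∑ v : Fin (N+1) → K, ∑ i, b (v i)
        = k ^ N * (∑ u, b u)
          + (Fintype.card K : ℝ) * (∑ w : Fin N → K, ∑ i, b (w i)) := by
      rw [sum_pi_fin_succ (fun v => ∑ i, b (v i))]
      simp_rw [h1, Finset.sum_add_distrib, Finset.sum_const, Finset.card_univ,
        Fintype.card_fun, Fintype.card_fin, nsmul_eq_mul, ← Finset.mul_sum]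
      push_cast
      ring
    rw [e1]
    push_cast
    linear_combination k * ih

lemma sumT {K : Type*} [Fintype K] (b : K → ℝ) :
    ∀ N : ℕ, (∑ v : Fin N → K, (∑ i, b (v i)) ^ 2) * (Fintype.card K : ℝ) ^ 2
      = N * (Fintype.card K : ℝ) ^ (N + 1) * ∑ u, b u ^ 2
        + (N * (N - 1)) * (Fintype.card K : ℝ) ^ N * (∑ u, b u) ^ 2 := by
  intro N
  induction N with
  | zero => simp
  | succ N ih =>
    set k : ℝ := (Fintype.card K : ℝ) with hk
    have hU := sumU b N
    have h1 : ∀ (x : K) (w : Fin N → K),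
        (∑ i : Fin (N+1), b ((Fin.cons x w : Fin (N+1) → K) i)) ^ 2
          = b x ^ 2 + 2 * (b x * (∑ i, b (w i))) + (∑ i, b (w i)) ^ 2 := by
      intro x w
      rw [Fin.sum_univ_succ]
      simp only [Fin.cons_zero, Fin.cons_succ]
      ring
    have e1 : ∑ v : Fin (N+1) → K, (∑ i, b (v i)) ^ 2
        = k ^ N * (∑ u, b u ^ 2)
          + 2 * ((∑ u, b u) * (∑ w : Fin N → K, ∑ i, b (w i)))
          + (Fintype.card K : ℝ) * (∑ w : Fin N → K, (∑ i, b (w i)) ^ 2) := by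
      rw [sum_pi_fin_succ (fun v => (∑ i, b (v i)) ^ 2)]
      simp_rw [h1, Finset.sum_add_distrib, Finset.sum_const, Finset.card_univ,
        Fintype.card_fun, Fintype.card_fin, nsmul_eq_mul, ← Finset.mul_sum,
        ← Finset.sum_mul]
      push_cast
      ring
    rw [e1]
    push_cast
    push_cast at ih hU
    linear_combination k * ih + (2 * k * ∑ u, b u) * hU

lemma keyIdentity {K : Type*} [Fintype K] [Nonempty K] (b : K → ℝ) (θ : ℝ)
    (N : ℕ) (hN : 1 ≤ N) :
    ∑ v : Fin N → K, ((Fintype.card K : ℝ)⁻¹ ^ N * ((N : ℝ)⁻¹ * (∑ i, b (v i)) - θ) ^ 2)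
      = (N : ℝ)⁻¹ * ((Fintype.card K : ℝ)⁻¹ * (∑ u, b u ^ 2)
            - ((Fintype.card K : ℝ)⁻¹ * (∑ u, b u)) ^ 2)
        + ((Fintype.card K : ℝ)⁻¹ * (∑ u, b u) - θ) ^ 2 := by
  set k : ℝ := (Fintype.card K : ℝ) with hkdef
  have hk0 : k ≠ 0 := by
    have : 0 < Fintype.card K := Fintype.card_pos
    positivity
  have hN0 : (N : ℝ) ≠ 0 := by positivity
  have hT := sumT b N
  have hU := sumU b N
  have expand : ∀ v : Fin N → K,
      k⁻¹ ^ N * ((N : ℝ)⁻¹ * (∑ i, b (v i)) - θ) ^ 2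
        = (k⁻¹ ^ N * (N : ℝ)⁻¹ ^ 2) * (∑ i, b (v i)) ^ 2
          - (k⁻¹ ^ N * (2 * θ * (N : ℝ)⁻¹)) * (∑ i, b (v i))
          + k⁻¹ ^ N * θ ^ 2 := by
    intro v; ring
  rw [Finset.sum_congr rfl fun v _ => expand v]
  rw [Finset.sum_add_distrib, Finset.sum_sub_distrib, ← Finset.mul_sum, ← Finset.mul_sum,
    Finset.sum_const, Finset.card_univ, Fintype.card_fun, Fintype.card_fin]
  have hTT : (∑ v : Fin N → K, (∑ i, b (v i)) ^ 2)
      = ((N : ℝ) * k ^ (N + 1) * (∑ u, b u ^ 2)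
          + ((N : ℝ) * ((N : ℝ) - 1)) * k ^ N * (∑ u, b u) ^ 2) / k ^ 2 := by
    rw [eq_div_iff (pow_ne_zero 2 hk0)]; exact hT
  have hUU : (∑ v : Fin N → K, ∑ i, b (v i)) = (N : ℝ) * k ^ N * (∑ u, b u) / k := by
    rw [eq_div_iff hk0]; exact hU
  rw [hTT, hUU, inv_pow]
  simp only [nsmul_eq_mul, Nat.cast_pow, ← hkdef]
  have hkN : k ^ N ≠ 0 := pow_ne_zero _ hk0
  field_simp
  ring

lemma integral_sq_sub_aux {Ω : Type*} [MeasurableSpace Ω] {μ : Measure Ω} [IsProbabilityMeasure μ]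
    {f : Ω → ℝ} (hf : MemLp f 2 μ) (θ : ℝ) :
    ∫ ω, (f ω - θ) ^ 2 ∂μ = variance f μ + ((∫ ω, f ω ∂μ) - θ) ^ 2 := by
  have h1 : Integrable f μ := hf.integrable one_le_two
  have h2 : Integrable (fun ω => f ω ^ 2) μ := hf.integrable_sq
  have e : ∀ ω, (f ω - θ) ^ 2 = f ω ^ 2 - (2 * θ) * f ω + θ ^ 2 := fun ω => by ring
  rw [variance_eq_sub hf]
  simp_rw [e]
  have h3 : Integrable (fun ω => f ω ^ 2 - 2 * θ * f ω) μ := h2.sub (h1.const_mul (2 * θ))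
  rw [integral_add h3 (integrable_const _), integral_sub h2 (h1.const_mul (2 * θ)),
    integral_const_mul, integral_const]
  have h4 : ∫ x, (f ^ 2) x ∂μ = ∫ x, f x ^ 2 ∂μ := by simp [Pi.pow_apply]
  rw [h4]
  simp only [measure_univ, ENNReal.toReal_one, probReal_univ, smul_eq_mul, one_mul]
  ring

set_option maxHeartbeats 1000000 in
lemma main_aux {Ω : Type*} [MeasurableSpace Ω] (μ : Measure Ω) [IsProbabilityMeasure μ]
    {K : Type*} [Fintype K] [Nonempty K] [MeasurableSpace K] [MeasurableSingletonClass K]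
    (π : Measure K) [IsProbabilityMeasure π]
    (hπ : ∀ u : K, π {u} = (Fintype.card K : ℝ≥0∞)⁻¹)
    (a : K → Ω → ℝ) (ha : ∀ u, MemLp (a u) 2 μ) (θ : ℝ) (N : ℕ) (hN : 1 ≤ N) :
    ∫ p : Ω × (Fin N → K), ((N : ℝ)⁻¹ * ∑ i, a (p.2 i) p.1 - θ) ^ 2
        ∂(μ.prod (Measure.pi fun _ : Fin N => π))
      = (∫ ω, variance (fun u => a u ω) π ∂μ) / N
        + (variance (fun ω => ∫ u, a u ω ∂π) μ
            + ((∫ ω, ∫ u, a u ω ∂π ∂μ) - θ) ^ 2) := by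
  have hcard : 0 < Fintype.card K := Fintype.card_pos
  set k : ℝ := (Fintype.card K : ℝ) with hkdef
  have hk0 : k ≠ 0 := by positivity
  have hπreal : ∀ u : K, (π {u}).toReal = k⁻¹ := by
    intro u
    rw [hπ u]
    simp [ENNReal.toReal_inv, hkdef]
  -- integral over π is the normalized sum
  have hIunif : ∀ ω, ∫ u, a u ω ∂π = k⁻¹ * ∑ u, a u ω := by
    intro ω
    rw [integral_fintype (Integrable.of_finite)]
    simp_rw [measureReal_def, hπreal, smul_eq_mul]
    rw [← Finset.mul_sum]
  have hmemπ : ∀ f : K → ℝ, MemLp f 2 π := fun f =>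
    (memLp_two_iff_integrable_sq (Integrable.of_finite (f := f)).aestronglyMeasurable).2
      Integrable.of_finite
  have hvar : ∀ ω, variance (fun u => a u ω) π
      = k⁻¹ * (∑ u, a u ω ^ 2) - (k⁻¹ * ∑ u, a u ω) ^ 2 := by
    intro ω
    rw [variance_eq_sub (hmemπ _)]
    have h4 : ∫ u, ((fun u => a u ω) ^ 2) u ∂π = ∫ u, a u ω ^ 2 ∂π := by simp [Pi.pow_apply]
    rw [h4, hIunif ω, integral_fintype (Integrable.of_finite)]
    simp_rw [measureReal_def, hπreal, smul_eq_mul]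
    rw [← Finset.mul_sum]
  -- MemLp facts over μ
  have hB1 : MemLp (fun ω => ∑ u, a u ω) 2 μ := memLp_finset_sum _ fun u _ => ha u
  have hA : MemLp (fun ω => k⁻¹ * ∑ u, a u ω) 2 μ := hB1.const_mul _
  -- integrands
  have hint : ∀ v : Fin N → K,
      Integrable (fun ω => ((N : ℝ)⁻¹ * ∑ i, a (v i) ω - θ) ^ 2) μ := by
    intro v
    exact (((memLp_finset_sum _ fun i _ => ha (v i)).const_mul _).sub
      (memLp_const θ)).integrable_sq
  -- step 1 : Fubini over the finite factor
  rw [integral_prod_finite μ (Measure.pi fun _ : Fin N => π)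
    (fun ω v => ((N : ℝ)⁻¹ * ∑ i, a (v i) ω - θ) ^ 2) hint]
  -- step 2 : singleton masses of the product measure
  have hsingpi : ∀ v : Fin N → K,
      (((Measure.pi fun _ : Fin N => π) : Measure (Fin N → K)) {v}).toReal = k⁻¹ ^ N := by
    intro v
    rw [show ({v} : Set (Fin N → K)) = Set.pi Set.univ (fun i => {v i}) from
      (Set.univ_pi_singleton v).symm, Measure.pi_pi]
    simp_rw [hπ]
    simp [ENNReal.toReal_inv, hkdef]
  simp_rw [hsingpi]
  -- step 3 : put the sum inside the integral
  have hswap : ∑ v : Fin N → K, k⁻¹ ^ N * ∫ ω, ((N : ℝ)⁻¹ * ∑ i, a (v i) ω - θ) ^ 2 ∂μ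
      = ∫ ω, ∑ v : Fin N → K, k⁻¹ ^ N * ((N : ℝ)⁻¹ * ∑ i, a (v i) ω - θ) ^ 2 ∂μ := by
    rw [integral_finset_sum _ fun v _ => (hint v).const_mul _]
    simp_rw [integral_const_mul]
  rw [hswap]
  -- step 4 : pointwise key identity
  have hpt : ∀ ω, ∑ v : Fin N → K, k⁻¹ ^ N * ((N : ℝ)⁻¹ * ∑ i, a (v i) ω - θ) ^ 2
      = (N : ℝ)⁻¹ * variance (fun u => a u ω) π + (k⁻¹ * ∑ u, a u ω - θ) ^ 2 := by
    intro ω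
    rw [keyIdentity (fun u => a u ω) θ N hN, hvar ω]
  simp_rw [hpt]
  -- step 5 : split the integral
  have Ivar : Integrable (fun ω => variance (fun u => a u ω) π) μ := by
    have : (fun ω => variance (fun u => a u ω) π)
        = fun ω => k⁻¹ * (∑ u, a u ω ^ 2) - (k⁻¹ * ∑ u, a u ω) ^ 2 := funext hvar
    rw [this]
    exact ((integrable_finset_sum _ fun u _ => (ha u).integrable_sq).const_mul _).sub
      hA.integrable_sq
  have Isq : Integrable (fun ω => (k⁻¹ * ∑ u, a u ω - θ) ^ 2) μ :=
    (hA.sub (memLp_const θ)).integrable_sq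
  rw [integral_add (Ivar.const_mul _) Isq, integral_const_mul,
    integral_sq_sub_aux hA θ]
  have hrew : (fun ω => ∫ u, a u ω ∂π) = fun ω => k⁻¹ * ∑ u, a u ω := funext hIunif
  rw [show (∫ ω, ∫ u, a u ω ∂π ∂μ) = ∫ ω, k⁻¹ * ∑ u, a u ω ∂μ by rw [hrew]]
  rw [show variance (fun ω => ∫ u, a u ω ∂π) μ
      = variance (fun ω => k⁻¹ * ∑ u, a u ω) μ by rw [hrew]]
  rw [div_eq_inv_mul]

/-- `MSE(θ̃) = F/N + G` with `F = E_L[Var_U(θ̂(L_U))] ≥ 0` and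
`G = Var_L(E_U[θ̂(L_U)]) + (E_L[E_U[θ̂(L_U)]] − θ)² ≥ 0` independent of `N`;
in particular the MSE is nonincreasing in `N`. -/
theorem bagged_estimator_mse
    {Ω : Type*} [MeasurableSpace Ω] (μ : Measure Ω) [IsProbabilityMeasure μ]
    (n m : ℕ) [NeZero n]
    (X : Fin n → Ω → ℝ) (hXmeas : ∀ i, Measurable (X i))
    (hXindep : iIndepFun X μ)
    (ν : Measure ℝ) (hXid : ∀ i, Measure.map (X i) μ = ν)
    (θhat : (Fin m → ℝ) → ℝ) (hθmeas : Measurable θhat)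
    (hL2 : ∀ u : Fin m → Fin n, MemLp (fun ω => θhat fun j => X (u j) ω) 2 μ)
    (θ : ℝ) :
    (0 ≤ ∫ ω, variance (fun u => θhat fun j => X (u j) ω) (unif n m) ∂μ) ∧
    (0 ≤ variance (fun ω => ∫ u, θhat (fun j => X (u j) ω) ∂(unif n m)) μ
          + (∫ ω, ∫ u, θhat (fun j => X (u j) ω) ∂(unif n m) ∂μ - θ) ^ 2) ∧
    (∀ N : ℕ, 1 ≤ N →
      baggedMSE μ n m X θhat θ N
        = (∫ ω, variance (fun u => θhat fun j => X (u j) ω) (unif n m) ∂μ) / N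
          + (variance (fun ω => ∫ u, θhat (fun j => X (u j) ω) ∂(unif n m)) μ
              + (∫ ω, ∫ u, θhat (fun j => X (u j) ω) ∂(unif n m) ∂μ - θ) ^ 2)) ∧
    (∀ N₁ N₂ : ℕ, 1 ≤ N₁ → N₁ ≤ N₂ →
      baggedMSE μ n m X θhat θ N₂ ≤ baggedMSE μ n m X θhat θ N₁) := by
  have hπ : ∀ u : Fin m → Fin n,
      (unif n m) {u} = (Fintype.card (Fin m → Fin n) : ℝ≥0∞)⁻¹ := by
    intro u
    rw [unif, PMF.toMeasure_apply_singleton _ _ (measurableSet_singleton u),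
      PMF.uniformOfFintype_apply]
  haveI : IsProbabilityMeasure (unif n m) := by unfold unif; infer_instance
  have key : ∀ N : ℕ, 1 ≤ N →
      baggedMSE μ n m X θhat θ N
        = (∫ ω, variance (fun u => θhat fun j => X (u j) ω) (unif n m) ∂μ) / N
          + (variance (fun ω => ∫ u, θhat (fun j => X (u j) ω) ∂(unif n m)) μ
              + (∫ ω, ∫ u, θhat (fun j => X (u j) ω) ∂(unif n m) ∂μ - θ) ^ 2) := by
    intro N hN
    exact main_aux μ (unif n m) hπ (fun u ω => θhat fun j => X (u j) ω) hL2 θ N hN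
  refine ⟨integral_nonneg fun ω => variance_nonneg _ _,
    add_nonneg (variance_nonneg _ _) (sq_nonneg _), key, ?_⟩
  intro N₁ N₂ h₁ h₁₂
  rw [key N₁ h₁, key N₂ (h₁.trans h₁₂)]
  have hF : 0 ≤ ∫ ω, variance (fun u => θhat fun j => X (u j) ω) (unif n m) ∂μ :=
    integral_nonneg fun ω => variance_nonneg _ _
  have hN₁ : (0 : ℝ) < N₁ := by exact_mod_cast h₁
  gcongr
end

section
/- In the same setting, the bagged sample variance estimator ṽ(L,B) = (1/N) Σ_{i=1}^N v̂(L_{U^i}) (N independent bootstrap samples of size m) has expectation E[ṽ(L,B)] = ((n−1)/n)·μ₂; in particular its bias is −μ₂/n, independent of N and m. -/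
open MeasureTheory ProbabilityTheory Finset ENNReal

/-- The unbiased sample variance of the bootstrap sample `L_U` of size `m`. -/
noncomputable def vhatBoot {Ω : Type*} (n m : ℕ) (X : Fin n → Ω → ℝ)
    (ω : Ω) (u : Fin m → Fin n) : ℝ :=
  ((m : ℝ) - 1)⁻¹ * ∑ j, (X (u j) ω - (m : ℝ)⁻¹ * ∑ k, X (u k) ω) ^ 2

lemma card_ne_aux {ι : Type*} [Fintype ι] [DecidableEq ι] (j : ι) :
    Fintype.card {k : ι // k ≠ j} = Fintype.card ι - 1 := by
  simp [Fintype.card_subtype_compl, Fintype.card_subtype_eq]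

lemma sum_eval_fun {ι α : Type*} [Fintype ι] [DecidableEq ι] [Fintype α] (j : ι) (g : α → ℝ) :
    ∑ u : ι → α, g (u j) = (Fintype.card α : ℝ) ^ (Fintype.card ι - 1) * ∑ a, g a := by
  classical
  rw [← Equiv.sum_comp (Equiv.funSplitAt j α).symm (fun u => g (u j))]
  have h1 : ∀ p : α × ({ k : ι // k ≠ j } → α), ((Equiv.funSplitAt j α).symm p) j = p.1 := by
    intro p; simp [Equiv.funSplitAt, Equiv.piSplitAt]
  simp_rw [h1]
  rw [Fintype.sum_prod_type]
  simp [Finset.sum_const, card_univ, Fintype.card_fun, card_ne_aux, mul_comm, Finset.sum_mul]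

lemma sum_eval_pair {ι α : Type*} [Fintype ι] [DecidableEq ι] [Fintype α] {j k : ι}
    (hjk : k ≠ j) (g h : α → ℝ) :
    ∑ u : ι → α, g (u j) * h (u k)
      = (Fintype.card α : ℝ) ^ (Fintype.card ι - 2) * ((∑ a, g a) * (∑ a, h a)) := by
  classical
  rw [← Equiv.sum_comp (Equiv.funSplitAt j α).symm (fun u => g (u j) * h (u k))]
  have h1 : ∀ p : α × ({ i : ι // i ≠ j } → α), ((Equiv.funSplitAt j α).symm p) j = p.1 := by
    intro p; simp [Equiv.funSplitAt, Equiv.piSplitAt]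
  have h2 : ∀ p : α × ({ i : ι // i ≠ j } → α),
      ((Equiv.funSplitAt j α).symm p) k = p.2 ⟨k, hjk⟩ := by
    intro p; simp [Equiv.funSplitAt, Equiv.piSplitAt, hjk]
  simp_rw [h1, h2]
  rw [Fintype.sum_prod_type]
  have h3 : ∑ r : { i : ι // i ≠ j } → α, h (r ⟨k, hjk⟩)
      = (Fintype.card α : ℝ) ^ (Fintype.card ι - 1 - 1) * ∑ a, h a := by
    rw [sum_eval_fun, card_ne_aux]
  calc ∑ a : α, ∑ r : { i : ι // i ≠ j } → α, g a * h (r ⟨k, hjk⟩)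
      = ∑ a : α, g a * ∑ r : { i : ι // i ≠ j } → α, h (r ⟨k, hjk⟩) := by
        simp [Finset.mul_sum]
    _ = (Fintype.card α : ℝ) ^ (Fintype.card ι - 2) * ((∑ a, g a) * (∑ a, h a)) := by
        rw [h3]; rw [← Finset.sum_mul]; ring_nf
        congr 1

lemma key_alg (n m : ℕ) [NeZero n] (hm : 2 ≤ m) (x : Fin n → ℝ) :
    ∑ u : Fin m → Fin n, (((m:ℝ) - 1)⁻¹ * ∑ j, (x (u j) - (m:ℝ)⁻¹ * ∑ k, x (u k))^2)
      = (n:ℝ)^(m-1) * (∑ i, (x i)^2) - (n:ℝ)^(m-2) * (∑ i, x i)^2 := by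
  classical
  have hm0 : (m:ℝ) ≠ 0 := by
    have : (0:ℝ) < m := by exact_mod_cast lt_of_lt_of_le (by norm_num) hm
    exact ne_of_gt this
  have hm1 : (m:ℝ) - 1 ≠ 0 := by
    have : (2:ℝ) ≤ m := by exact_mod_cast hm
    nlinarith
  -- pointwise identity in u
  have inner : ∀ u : Fin m → Fin n,
      ∑ j, (x (u j) - (m:ℝ)⁻¹ * ∑ k, x (u k))^2
        = (∑ j, (x (u j))^2) - (m:ℝ)⁻¹ * (∑ j, x (u j))^2 := by
    intro u
    set S := ∑ k, x (u k) with hS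
    have expand : ∀ j : Fin m, (x (u j) - (m:ℝ)⁻¹ * S)^2
        = (x (u j))^2 - (2 * (m:ℝ)⁻¹ * S) * x (u j) + ((m:ℝ)⁻¹ * S)^2 := by
      intro j; ring
    rw [Finset.sum_congr rfl fun j _ => expand j]
    rw [Finset.sum_add_distrib, Finset.sum_sub_distrib, ← Finset.mul_sum, ← hS,
      Finset.sum_const, Finset.card_univ, Fintype.card_fin, nsmul_eq_mul]
    field_simp
    ring
  rw [Finset.sum_congr rfl fun u _ => congrArg (((m:ℝ) - 1)⁻¹ * ·) (inner u)]
  simp only [mul_sub]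
  rw [Finset.sum_sub_distrib, ← Finset.mul_sum, ← Finset.mul_sum, ← Finset.mul_sum]
  -- first term
  have hA : ∑ u : Fin m → Fin n, ∑ j, (x (u j))^2
      = (m:ℝ) * ((n:ℝ)^(m-1) * ∑ i, (x i)^2) := by
    rw [Finset.sum_comm]
    have : ∀ j : Fin m, ∑ u : Fin m → Fin n, (x (u j))^2
        = (n:ℝ)^(m-1) * ∑ i, (x i)^2 := by
      intro j
      have := sum_eval_fun (α := Fin n) j (fun a => (x a)^2)
      simpa [Fintype.card_fin] using this
    rw [Finset.sum_congr rfl fun j _ => this j, Finset.sum_const, Finset.card_univ,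
      Fintype.card_fin, nsmul_eq_mul]
  -- second term
  have hB : ∑ u : Fin m → Fin n, (∑ j, x (u j))^2
      = (m:ℝ) * ((n:ℝ)^(m-1) * ∑ i, (x i)^2)
        + ((m:ℝ) * ((m:ℝ) - 1)) * ((n:ℝ)^(m-2) * (∑ i, x i)^2) := by
    have hsq : ∀ u : Fin m → Fin n, (∑ j, x (u j))^2 = ∑ j, ∑ k, x (u j) * x (u k) := by
      intro u
      rw [sq, Finset.sum_mul_sum]
    rw [Finset.sum_congr rfl fun u _ => hsq u]
    rw [Finset.sum_comm]
    have h1 : ∀ j : Fin m, ∑ u : Fin m → Fin n, ∑ k, x (u j) * x (u k)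
        = ∑ k, ∑ u : Fin m → Fin n, x (u j) * x (u k) := fun j => Finset.sum_comm
    rw [Finset.sum_congr rfl fun j _ => h1 j]
    have h2 : ∀ j k : Fin m, ∑ u : Fin m → Fin n, x (u j) * x (u k)
        = if j = k then (n:ℝ)^(m-1) * ∑ i, (x i)^2
          else (n:ℝ)^(m-2) * (∑ i, x i)^2 := by
      intro j k
      split_ifs with h
      · subst h
        have := sum_eval_fun (α := Fin n) j (fun a => x a * x a)
        simpa [Fintype.card_fin, sq] using this
      · have := sum_eval_pair (α := Fin n) (Ne.symm h) x x
        simpa [Fintype.card_fin, sq] using this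
    rw [Finset.sum_congr rfl fun j _ => Finset.sum_congr rfl fun k _ => h2 j k]
    have h3 : ∀ j : Fin m, ∑ k : Fin m, (if j = k then (n:ℝ)^(m-1) * ∑ i, (x i)^2
          else (n:ℝ)^(m-2) * (∑ i, x i)^2)
        = (n:ℝ)^(m-1) * (∑ i, (x i)^2)
          + ((m:ℝ) - 1) * ((n:ℝ)^(m-2) * (∑ i, x i)^2) := by
      intro j
      have split : ∀ k : Fin m, (if j = k then (n:ℝ)^(m-1) * ∑ i, (x i)^2
            else (n:ℝ)^(m-2) * (∑ i, x i)^2)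
          = (n:ℝ)^(m-2) * (∑ i, x i)^2
            + (if j = k then (n:ℝ)^(m-1) * (∑ i, (x i)^2)
                - (n:ℝ)^(m-2) * (∑ i, x i)^2 else 0) := by
        intro k; split_ifs with h <;> ring
      rw [Finset.sum_congr rfl fun k _ => split k, Finset.sum_add_distrib,
        Finset.sum_const, Finset.sum_ite_eq, Finset.card_univ, Fintype.card_fin,
        nsmul_eq_mul]
      simp only [Finset.mem_univ, if_true]
      ring
    rw [Finset.sum_congr rfl fun j _ => h3 j, Finset.sum_const, Finset.card_univ,
      Fintype.card_fin, nsmul_eq_mul]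
    ring
  rw [hA, hB]
  field_simp
  ring

lemma prod_smul_right' {α β : Type*} [MeasurableSpace α] [MeasurableSpace β]
    (μ : Measure α) [SFinite μ] (ν : Measure β) [SFinite ν] (c : ℝ≥0∞) :
    μ.prod (c • ν) = c • (μ.prod ν) := by
  ext s hs
  rw [Measure.smul_apply, Measure.prod_apply hs, Measure.prod_apply hs]
  simp only [Measure.smul_apply, smul_eq_mul]
  rw [lintegral_const_mul _ (measurable_measure_prodMk_left hs)]

lemma integral_prod_fintype {Ω V : Type*} [MeasurableSpace Ω] [MeasurableSpace V]
    [Fintype V] [MeasurableSingletonClass V]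
    (μ : Measure Ω) [SFinite μ] (ρ : Measure V)
    (F : Ω × V → ℝ) (hint : ∀ v, Integrable (fun ω => F (ω, v)) μ)
    (hρ : ∀ v, ρ {v} ≠ ⊤) :
    ∫ p, F p ∂(μ.prod ρ) = ∑ v, (ρ {v}).toReal * ∫ ω, F (ω, v) ∂μ := by
  have hd : ∀ v : V, μ.prod ((ρ {v}) • Measure.dirac v)
      = (ρ {v}) • (Measure.map (fun ω => (ω, v)) μ) := by
    intro v
    rw [prod_smul_right', Measure.prod_dirac]
  conv_lhs => rw [← Measure.sum_smul_dirac ρ, Measure.prod_sum_right,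
    Measure.sum_fintype]
  rw [integral_finset_sum_measure ?hI]
  case hI =>
    intro v _
    rw [hd v]
    exact (((measurableEmbedding_prod_mk_right v).integrable_map_iff).mpr
      (hint v)).smul_measure (hρ v)
  refine Finset.sum_congr rfl fun v _ => ?_
  rw [hd v, integral_smul_measure, (measurableEmbedding_prod_mk_right v).integral_map,
    smul_eq_mul]

instance unif_prob (n m : ℕ) [NeZero n] : IsProbabilityMeasure (unif n m) :=
  PMF.toMeasure.isProbabilityMeasure _

lemma unif_singleton (n m : ℕ) [NeZero n] (u : Fin m → Fin n) :
    unif n m {u} = ((n ^ m : ℕ) : ℝ≥0∞)⁻¹ := by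
  rw [unif, PMF.toMeasure_apply_singleton _ _ (measurableSet_singleton u),
    PMF.uniformOfFintype_apply]
  congr
  simp [Fintype.card_fun]

lemma pi_unif_singleton (n m N : ℕ) [NeZero n] (v : Fin N → Fin m → Fin n) :
    (Measure.pi fun _ : Fin N => unif n m) {v} = (((n ^ m : ℕ) : ℝ≥0∞)⁻¹) ^ N := by
  rw [← Set.univ_pi_singleton v, Measure.pi_pi]
  simp only [unif_singleton]
  rw [Finset.prod_const, Finset.card_univ, Fintype.card_fin]

/-- The bagged sample variance estimator satisfies
`E[ṽ(L,B)] = ((n−1)/n)·μ₂`; in particular its bias is `−μ₂/n`,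
independent of `N` and `m`. -/
theorem bagged_sample_variance_mean_and_bias
    {Ω : Type*} [MeasurableSpace Ω] (μ : Measure Ω) [IsProbabilityMeasure μ]
    (n m N : ℕ) [NeZero n] (hm : 2 ≤ m) (hN : 0 < N)
    (X : Fin n → Ω → ℝ) (hXmeas : ∀ i, Measurable (X i))
    (hXindep : iIndepFun X μ)
    (ν : Measure ℝ) (hXid : ∀ i, Measure.map (X i) μ = ν)
    (hL4 : ∀ i, MemLp (X i) 4 μ)
    (hcentered : ∫ ω, X ⟨0, Nat.pos_of_ne_zero (NeZero.ne n)⟩ ω ∂μ = 0)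
    (μ₂ : ℝ)
    (hμ₂ : μ₂ = ∫ ω, (X ⟨0, Nat.pos_of_ne_zero (NeZero.ne n)⟩ ω) ^ 2 ∂μ) :
    (∫ p : Ω × (Fin N → (Fin m → Fin n)),
        (N : ℝ)⁻¹ * ∑ i : Fin N, vhatBoot n m X p.1 (p.2 i)
        ∂(μ.prod (Measure.pi fun _ : Fin N => unif n m))
      = (((n : ℝ) - 1) / n) * μ₂) ∧
    ((∫ p : Ω × (Fin N → (Fin m → Fin n)),
        (N : ℝ)⁻¹ * ∑ i : Fin N, vhatBoot n m X p.1 (p.2 i)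
        ∂(μ.prod (Measure.pi fun _ : Fin N => unif n m))) - μ₂
      = -μ₂ / n) := by
  classical
  have hn : (n:ℝ) ≠ 0 := Nat.cast_ne_zero.mpr (NeZero.ne n)
  have hNne : (N:ℝ) ≠ 0 := Nat.cast_ne_zero.mpr hN.ne'
  set I0 : Fin n := ⟨0, Nat.pos_of_ne_zero (NeZero.ne n)⟩
  -- basic moment facts
  have hX2 : ∀ i, MemLp (X i) 2 μ := fun i =>
    (hL4 i).mono_exponent (by norm_num)
  have hmean : ∀ i, ∫ ω, X i ω ∂μ = 0 := by
    intro i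
    have h1 : ∫ x, x ∂(Measure.map (X i) μ) = ∫ ω, X i ω ∂μ :=
      integral_map (hXmeas i).aemeasurable aestronglyMeasurable_id
    have h2 : ∫ x, x ∂(Measure.map (X I0) μ) = ∫ ω, X I0 ω ∂μ :=
      integral_map (hXmeas I0).aemeasurable aestronglyMeasurable_id
    rw [hXid i] at h1; rw [hXid I0] at h2
    rw [← h1, h2, hcentered]
  have hsec : ∀ i, ∫ ω, (X i ω)^2 ∂μ = μ₂ := by
    intro i
    have hsm : AEStronglyMeasurable (fun x : ℝ => x ^ 2) (ν) :=
      (measurable_id.pow_const 2).aestronglyMeasurable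
    have h1 : ∫ x, x^2 ∂(Measure.map (X i) μ) = ∫ ω, (X i ω)^2 ∂μ :=
      integral_map (hXmeas i).aemeasurable (by rw [hXid i]; exact hsm)
    have h2 : ∫ x, x^2 ∂(Measure.map (X I0) μ) = ∫ ω, (X I0 ω)^2 ∂μ :=
      integral_map (hXmeas I0).aemeasurable (by rw [hXid I0]; exact hsm)
    rw [hXid i] at h1; rw [hXid I0] at h2
    rw [← h1, h2, ← hμ₂]
  have hcross : ∀ i k, i ≠ k → ∫ ω, X i ω * X k ω ∂μ = 0 := by
    intro i k hik
    have h := (ProbabilityTheory.iIndepFun.indepFun hXindep hik).integral_mul_eq_mul_integral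
      (hXmeas i).aestronglyMeasurable (hXmeas k).aestronglyMeasurable
    simpa [Pi.mul_apply, hmean i, hmean k] using h
  have hmul : ∀ i k, Integrable (fun ω => X i ω * X k ω) μ := by
    intro i k
    have h1 : Integrable (fun ω => (X i ω + X k ω)^2) μ := by
      have : MemLp (fun ω => X i ω + X k ω) 2 μ := (hX2 i).add (hX2 k)
      exact this.integrable_sq
    have h2 := (hX2 i).integrable_sq
    have h3 := (hX2 k).integrable_sq
    have key : Integrable
        (fun ω => (((X i ω + X k ω)^2 - (X i ω)^2) - (X k ω)^2) / 2) μ :=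
      ((h1.sub h2).sub h3).div_const 2
    refine key.congr (Filter.Eventually.of_forall fun ω => ?_)
    ring
  -- integrability of the bootstrap variance
  have hvin : ∀ u : Fin m → Fin n, Integrable (fun ω => vhatBoot n m X ω u) μ := by
    intro u
    simp only [vhatBoot]
    refine Integrable.const_mul (integrable_finset_sum _ fun j _ => ?_) _
    have hmem : MemLp (fun ω => X (u j) ω - (m:ℝ)⁻¹ * ∑ k, X (u k) ω) 2 μ := by
      refine (hX2 (u j)).sub (MemLp.const_mul ?_ _)
      exact memLp_finset_sum _ fun k _ => hX2 (u k)
    exact hmem.integrable_sq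
  -- the inner expectation over ω, summed over all bootstrap maps
  have hGint1 : Integrable (fun ω => ∑ i, (X i ω)^2) μ :=
    integrable_finset_sum _ fun i _ => (hX2 i).integrable_sq
  have hGint2 : Integrable (fun ω => (∑ i, X i ω)^2) μ :=
    (memLp_finset_sum _ fun i _ => hX2 i).integrable_sq
  have hsum_sq : ∫ ω, ∑ i, (X i ω)^2 ∂μ = (n:ℝ) * μ₂ := by
    rw [integral_finset_sum _ fun i _ => (hX2 i).integrable_sq]
    rw [Finset.sum_congr rfl fun i _ => hsec i, Finset.sum_const, Finset.card_univ,
      Fintype.card_fin, nsmul_eq_mul]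
  have hsq_sum : ∫ ω, (∑ i, X i ω)^2 ∂μ = (n:ℝ) * μ₂ := by
    have hexp : ∀ ω, (∑ i, X i ω)^2 = ∑ i, ∑ k, X i ω * X k ω := by
      intro ω; rw [sq, Finset.sum_mul_sum]
    rw [integral_congr_ae (Filter.Eventually.of_forall hexp)]
    rw [integral_finset_sum _ fun i _ => integrable_finset_sum _ fun k _ => hmul i k]
    have : ∀ i : Fin n, ∫ ω, ∑ k, X i ω * X k ω ∂μ = μ₂ := by
      intro i
      rw [integral_finset_sum _ fun k _ => hmul i k]
      have hik : ∀ k : Fin n, ∫ ω, X i ω * X k ω ∂μ = if i = k then μ₂ else 0 := by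
        intro k
        split_ifs with h
        · subst h
          have : ∀ ω, X i ω * X i ω = (X i ω)^2 := fun ω => (sq (X i ω)).symm
          rw [integral_congr_ae (Filter.Eventually.of_forall this), hsec i]
        · exact hcross i k h
      rw [Finset.sum_congr rfl fun k _ => hik k, Finset.sum_ite_eq]
      simp
    rw [Finset.sum_congr rfl fun i _ => this i, Finset.sum_const, Finset.card_univ,
      Fintype.card_fin, nsmul_eq_mul]
  have hIh : ∑ u : Fin m → Fin n, ∫ ω, vhatBoot n m X ω u ∂μ
      = (n:ℝ)^(m-1) * ((n:ℝ) * μ₂) - (n:ℝ)^(m-2) * ((n:ℝ) * μ₂) := by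
    rw [← integral_finset_sum _ fun u _ => hvin u]
    have hpt : ∀ ω, ∑ u : Fin m → Fin n, vhatBoot n m X ω u
        = (n:ℝ)^(m-1) * (∑ i, (X i ω)^2) - (n:ℝ)^(m-2) * (∑ i, X i ω)^2 := by
      intro ω
      simpa [vhatBoot] using key_alg n m hm (fun i => X i ω)
    rw [integral_congr_ae (Filter.Eventually.of_forall hpt)]
    rw [integral_sub (hGint1.const_mul _) (hGint2.const_mul _),
      integral_const_mul, integral_const_mul, hsum_sq, hsq_sum]
  -- reduce the product integral to a finite sum
  have hρsing : ∀ v : Fin N → Fin m → Fin n,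
      (Measure.pi fun _ : Fin N => unif n m) {v} = (((n ^ m : ℕ) : ℝ≥0∞)⁻¹) ^ N :=
    fun v => pi_unif_singleton n m N v
  have hnm0 : ((n ^ m : ℕ) : ℝ≥0∞) ≠ 0 := by
    exact_mod_cast Nat.cast_ne_zero.mpr (pow_ne_zero m (NeZero.ne n))
  have hρfin : ∀ v : Fin N → Fin m → Fin n,
      (Measure.pi fun _ : Fin N => unif n m) {v} ≠ ⊤ := by
    intro v
    rw [hρsing v]
    exact ENNReal.pow_ne_top (ENNReal.inv_ne_top.mpr hnm0)
  have hFi : ∀ v : Fin N → Fin m → Fin n,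
      Integrable (fun ω => (N : ℝ)⁻¹ * ∑ i : Fin N, vhatBoot n m X ω (v i)) μ :=
    fun v => (integrable_finset_sum _ fun i _ => hvin (v i)).const_mul _
  have hmain : (∫ p : Ω × (Fin N → (Fin m → Fin n)),
      (N : ℝ)⁻¹ * ∑ i : Fin N, vhatBoot n m X p.1 (p.2 i)
      ∂(μ.prod (Measure.pi fun _ : Fin N => unif n m)))
      = (((n : ℝ) - 1) / n) * μ₂ := by
    rw [integral_prod_fintype μ _ _ hFi hρfin]
    have hw : ∀ v : Fin N → Fin m → Fin n,
        (((Measure.pi fun _ : Fin N => unif n m)) {v}).toReal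
          = (((n:ℝ)^m)^N)⁻¹ := by
      intro v
      rw [hρsing v, ENNReal.toReal_pow, ENNReal.toReal_inv]
      simp [ENNReal.toReal_natCast, Nat.cast_pow, inv_pow]
    have hintv : ∀ v : Fin N → Fin m → Fin n,
        ∫ ω, (N : ℝ)⁻¹ * ∑ i : Fin N, vhatBoot n m X ω (v i) ∂μ
          = (N:ℝ)⁻¹ * ∑ i : Fin N, ∫ ω, vhatBoot n m X ω (v i) ∂μ := by
      intro v
      rw [integral_const_mul, integral_finset_sum _ fun i _ => hvin (v i)]
    rw [Finset.sum_congr rfl fun v _ => by rw [hw v, hintv v]]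
    rw [← Finset.mul_sum, ← Finset.mul_sum, Finset.sum_comm]
    have hev : ∀ i : Fin N, ∑ v : Fin N → Fin m → Fin n, ∫ ω, vhatBoot n m X ω (v i) ∂μ
        = ((n:ℝ)^m)^(N-1) * ∑ u : Fin m → Fin n, ∫ ω, vhatBoot n m X ω u ∂μ := by
      intro i
      have := sum_eval_fun (ι := Fin N) (α := Fin m → Fin n) i
        (fun u => ∫ ω, vhatBoot n m X ω u ∂μ)
      simpa [Fintype.card_fun, Fintype.card_fin, Nat.cast_pow] using this
    rw [Finset.sum_congr rfl fun i _ => hev i, Finset.sum_const, Finset.card_univ,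
      Fintype.card_fin, nsmul_eq_mul, hIh]
    -- final arithmetic
    have e1 : ((n:ℝ)^m)^N = ((n:ℝ)^m)^(N-1) * (n:ℝ)^m := by
      rw [← pow_succ]; congr 1; omega
    have e2 : (n:ℝ)^m = (n:ℝ)^(m-2) * (n:ℝ)^2 := by
      rw [← pow_add]; congr 1; omega
    have e3 : (n:ℝ)^(m-1) = (n:ℝ)^(m-2) * (n:ℝ) := by
      rw [← pow_succ]; congr 1; omega
    rw [e1, e2, e3]
    have hP : (n:ℝ)^(m-2) ≠ 0 := pow_ne_zero _ hn
    have hQ : ((n:ℝ)^(m-2) * (n:ℝ)^2)^(N-1) ≠ 0 := pow_ne_zero _ (by positivity)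
    field_simp
  refine ⟨hmain, ?_⟩
  rw [hmain]
  field_simp
  ring
end

section
/- For i.i.d. centered X_1,...,X_n with finite fourth moment, the conditional expectation of the bootstrap sample variance over the uniform resampling satisfies: E_U[v̂(L_U)] has variance (over L) equal to Var_L(E_U[v̂(L_U)]) = ((3−n)(n−1)/n³)·μ₂² + ((n−1)²/n³)·μ₄. -/
open MeasureTheory ProbabilityTheory

lemma integral_unif {n m : ℕ} [NeZero n] (f : (Fin m → Fin n) → ℝ) :
    ∫ u, f u ∂(unif n m) = ((n : ℝ) ^ m)⁻¹ * ∑ u, f u := by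
  rw [unif, PMF.integral_eq_sum]
  simp [PMF.uniformOfFintype_apply, Finset.mul_sum, ENNReal.toReal_inv]

lemma sum_comp_eval {α β : Type*} [Fintype α] [DecidableEq α] [Fintype β] (c : α) (h : β → ℝ) :
    ∑ v : α → β, h (v c) = (Fintype.card β : ℝ) ^ (Fintype.card α - 1) * ∑ q, h q := by
  rw [← Equiv.sum_comp (Equiv.funSplitAt c β).symm (fun v => h (v c))]
  rw [Fintype.sum_prod_type]
  simp only [Equiv.funSplitAt_symm_apply, dif_pos rfl]
  rw [Finset.sum_comm]
  simp [Finset.sum_const, Finset.card_univ, Fintype.card_subtype_compl]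


lemma sum_comp_eval2 {α β : Type*} [Fintype α] [DecidableEq α] [Fintype β] {j k : α}
    (hjk : k ≠ j) (g : β → β → ℝ) :
    ∑ v : α → β, g (v j) (v k)
      = (Fintype.card β : ℝ) ^ (Fintype.card α - 2) * ∑ p, ∑ q, g p q := by
  rw [← Equiv.sum_comp (Equiv.funSplitAt j β).symm (fun v => g (v j) (v k))]
  rw [Fintype.sum_prod_type]
  simp only [Equiv.funSplitAt_symm_apply, dif_pos rfl, dif_neg hjk]
  have : ∀ p : β, ∑ v : {i // i ≠ j} → β, g p (v ⟨k, hjk⟩)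
      = (Fintype.card β : ℝ) ^ (Fintype.card α - 2) * ∑ q, g p q := by
    intro p
    rw [sum_comp_eval (⟨k, hjk⟩ : {i // i ≠ j}) (fun q => g p q)]
    congr 2
    · simp [Fintype.card_subtype_compl]; omega
  simp only [dite_true]
  simp only [this, Finset.mul_sum]

lemma integral_vhatBoot {Ω : Type*} (n m : ℕ) [NeZero n] (hm : 2 ≤ m)
    (X : Fin n → Ω → ℝ) (ω : Ω) :
    ∫ u, vhatBoot n m X ω u ∂(unif n m)
      = (n : ℝ)⁻¹ * ∑ i, (X i ω) ^ 2 - ((n : ℝ)⁻¹) ^ 2 * (∑ i, X i ω) ^ 2 := by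
  have hn : (n : ℝ) ≠ 0 := Nat.cast_ne_zero.2 (NeZero.ne n)
  have hm2 : (2:ℝ) ≤ (m:ℝ) := by exact_mod_cast hm
  have hm0 : (m : ℝ) ≠ 0 := by linarith
  have hm1 : (m : ℝ) - 1 ≠ 0 := by linarith
  set a : Fin n → ℝ := fun i => X i ω with ha
  have key : ∀ x : Fin m → ℝ, ∑ j, (x j - (m:ℝ)⁻¹ * ∑ k, x k) ^ 2
      = ∑ j, x j ^ 2 - (m:ℝ)⁻¹ * (∑ j, x j) ^ 2 := by
    intro x
    have h1 : ∀ j : Fin m, (x j - (m:ℝ)⁻¹ * ∑ k, x k) ^ 2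
        = x j ^ 2 - (2 * (m:ℝ)⁻¹ * ∑ k, x k) * x j + ((m:ℝ)⁻¹ * ∑ k, x k) ^ 2 :=
      fun j => by ring
    rw [Finset.sum_congr rfl fun j _ => h1 j, Finset.sum_add_distrib, Finset.sum_sub_distrib,
      ← Finset.mul_sum, Finset.sum_const, Finset.card_univ, Fintype.card_fin]
    field_simp
    have hmm : (m:ℝ) ^ 2 * ((m:ℝ)⁻¹) ^ 2 = 1 := by rw [← mul_pow, mul_inv_cancel₀ hm0, one_pow]
    linear_combination (∑ k, x k) ^ 2 * hmm
  have hvb : ∀ u : Fin m → Fin n, vhatBoot n m X ω u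
      = ((m:ℝ) - 1)⁻¹ * (∑ j, a (u j) ^ 2 - (m:ℝ)⁻¹ * (∑ j, a (u j)) ^ 2) := by
    intro u; rw [vhatBoot, key (fun j => a (u j))]
  have H1 : ∀ j : Fin m, ∑ u : Fin m → Fin n, a (u j) ^ 2
      = (n:ℝ)^(m-1) * ∑ i, a i ^ 2 := by
    intro j
    simpa using sum_comp_eval (α := Fin m) (β := Fin n) j (fun q => a q ^ 2)
  have S1sum : ∑ u : Fin m → Fin n, ∑ j, a (u j) ^ 2
      = (m:ℝ) * ((n:ℝ)^(m-1) * ∑ i, a i ^ 2) := by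
    rw [Finset.sum_comm]
    simp only [H1]
    rw [Finset.sum_const, Finset.card_univ, Fintype.card_fin, nsmul_eq_mul]
  have Spair : ∀ j k : Fin m, k ≠ j → ∑ u : Fin m → Fin n, a (u j) * a (u k)
      = (n:ℝ)^(m-2) * (∑ i, a i) ^ 2 := by
    intro j k hk
    have := sum_comp_eval2 (α := Fin m) (β := Fin n) hk (fun p q => a p * a q)
    simp only [Fintype.card_fin] at this
    rw [this, sq, Finset.sum_mul_sum]
  have Sdiag : ∀ j : Fin m, ∑ u : Fin m → Fin n, a (u j) * a (u j)
      = (n:ℝ)^(m-1) * ∑ i, a i ^ 2 := by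
    intro j
    rw [← H1 j]
    exact Finset.sum_congr rfl fun u _ => (sq (a (u j))).symm ▸ by ring
  have S2sum : ∑ u : Fin m → Fin n, (∑ j, a (u j)) ^ 2
      = (m:ℝ) * ((n:ℝ)^(m-1) * ∑ i, a i ^ 2)
        + (m:ℝ) * (((m:ℝ) - 1) * ((n:ℝ)^(m-2) * (∑ i, a i) ^ 2)) := by
    have expand : ∀ u : Fin m → Fin n, (∑ j, a (u j)) ^ 2 = ∑ j, ∑ k, a (u j) * a (u k) :=
      fun u => by rw [sq, Finset.sum_mul_sum]
    simp only [expand]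
    rw [Finset.sum_comm]
    have inner : ∀ j : Fin m, ∑ u : Fin m → Fin n, ∑ k, a (u j) * a (u k)
        = (n:ℝ)^(m-1) * ∑ i, a i ^ 2 + ((m:ℝ) - 1) * ((n:ℝ)^(m-2) * (∑ i, a i) ^ 2) := by
      intro j
      rw [Finset.sum_comm, ← Finset.add_sum_erase _ _ (Finset.mem_univ j), Sdiag j]
      congr 1
      rw [Finset.sum_congr rfl fun k hk => Spair j k (Finset.ne_of_mem_erase hk),
        Finset.sum_const, Finset.card_erase_of_mem (Finset.mem_univ j),
        Finset.card_univ, Fintype.card_fin, nsmul_eq_mul]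
      congr 1
      have : (1:ℕ) ≤ m := by omega
      push_cast [Nat.cast_sub this]
      ring
    simp only [inner]
    rw [Finset.sum_add_distrib, Finset.sum_const, Finset.sum_const, Finset.card_univ,
      Fintype.card_fin, nsmul_eq_mul, nsmul_eq_mul]
  rw [integral_unif]
  simp only [hvb]
  rw [← Finset.mul_sum, Finset.sum_sub_distrib, ← Finset.mul_sum, S1sum, S2sum]
  have hK : (n:ℝ)^(m-2) ≠ 0 := pow_ne_zero _ hn
  have e2 : (n:ℝ)^(m-1) = (n:ℝ) * (n:ℝ)^(m-2) := by
    have h2 : m - 1 = (m - 2) + 1 := by omega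
    rw [h2, pow_succ]; ring
  have e1 : (n:ℝ)^m = (n:ℝ) * (n:ℝ) * (n:ℝ)^(m-2) := by
    have h2 : m = (m - 2) + 2 := by omega
    calc (n:ℝ)^m = (n:ℝ)^((m-2)+2) := by rw [← h2]
    _ = _ := by rw [pow_add]; ring
  rw [e1, e2]
  field_simp
  ring

open scoped ENNReal

section Helpers

variable {Ω : Type*} [MeasurableSpace Ω] {μ : Measure Ω}

lemma L2mul {f g : Ω → ℝ} (hf : MemLp f 4 μ) (hg : MemLp g 4 μ) :
    MemLp (fun ω => f ω * g ω) 2 μ := by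
  haveI : ENNReal.HolderTriple 4 4 2 := ⟨by
    rw [← two_mul, show (4:ℝ≥0∞) = 2*2 by norm_num,
      ENNReal.mul_inv (by norm_num) (by norm_num), ← mul_assoc,
      ENNReal.mul_inv_cancel (by norm_num) (by norm_num), one_mul]⟩
  have := hg.smul hf (p := 4) (q := 4) (r := 2)
  exact hg.mul' hf

lemma L2int [IsFiniteMeasure μ] {f g : Ω → ℝ} (hf : MemLp f 2 μ) (hg : MemLp g 2 μ) :
    Integrable (fun ω => f ω * g ω) μ := by
  haveI : ENNReal.HolderTriple 2 2 1 := ⟨by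
    rw [inv_one, ← two_mul, ENNReal.mul_inv_cancel (by norm_num) (by norm_num)]⟩
  have := hg.smul hf (p := 2) (q := 2) (r := 1)
  rw [memLp_one_iff_integrable] at this
  exact memLp_one_iff_integrable.1 (hg.mul' hf)

variable {n : ℕ} {X : Fin n → Ω → ℝ}

lemma int_pow_pair (hXmeas : ∀ i, Measurable (X i))
    (hXindep : iIndepFun X μ) {a b : Fin n} (hab : a ≠ b) (p q : ℕ) :
    ∫ ω, (X a ω)^p * (X b ω)^q ∂μ
      = (∫ ω, (X a ω)^p ∂μ) * ∫ ω, (X b ω)^q ∂μ := by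
  have h := (hXindep.indepFun hab).comp (measurable_id.pow_const p) (measurable_id.pow_const q)
  exact h.integral_fun_mul_eq_mul_integral ((hXmeas a).pow_const p).aestronglyMeasurable
    ((hXmeas b).pow_const q).aestronglyMeasurable

lemma int_pow_triple (hXmeas : ∀ i, Measurable (X i))
    (hXindep : iIndepFun X μ) {a b c : Fin n}
    (hab : a ≠ b) (hac : a ≠ c) (hbc : b ≠ c) (p q r : ℕ) :
    ∫ ω, (X a ω)^p * (X b ω)^q * (X c ω)^r ∂μ
      = (∫ ω, (X a ω)^p ∂μ) * (∫ ω, (X b ω)^q ∂μ) * ∫ ω, (X c ω)^r ∂μ := by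
  classical
  set e : Fin n → ℕ := fun i => if i = a then p else if i = b then q else r with he
  have hY : iIndepFun (fun i ω => (X i ω)^(e i)) μ :=
    hXindep.comp (fun i x => x ^ (e i)) (fun i => measurable_id.pow_const _)
  have hYmeas : ∀ i, Measurable (fun ω => (X i ω)^(e i)) := fun i => (hXmeas i).pow_const _
  have hcs : c ∉ ({a, b} : Finset (Fin n)) := by
    simp only [Finset.mem_insert, Finset.mem_singleton]
    push_neg
    exact ⟨Ne.symm hac, Ne.symm hbc⟩
  have h2 := hY.indepFun_finsetProd_of_notMem hYmeas hcs
  have hprod : (∏ j ∈ ({a, b} : Finset (Fin n)), (fun ω => (X j ω)^(e j)))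
      = fun ω => (X a ω)^p * (X b ω)^q := by
    rw [Finset.prod_pair hab]
    funext ω
    simp [he, Pi.mul_apply, Ne.symm hab]
  have hec : e c = r := by simp [he, Ne.symm hac, Ne.symm hbc]
  rw [hprod, hec] at h2
  have h3 := h2.integral_fun_mul_eq_mul_integral (((hXmeas a).pow_const p).mul ((hXmeas b).pow_const q)).aestronglyMeasurable
    ((hXmeas c).pow_const r).aestronglyMeasurable
  rw [h3, int_pow_pair hXmeas hXindep hab]

lemma int_pow_quad (hXmeas : ∀ i, Measurable (X i))
    (hXindep : iIndepFun X μ) {a b c d : Fin n}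
    (hab : a ≠ b) (hac : a ≠ c) (had : a ≠ d) (hbc : b ≠ c) (hbd : b ≠ d) (hcd : c ≠ d)
    (p q r s : ℕ) :
    ∫ ω, (X a ω)^p * (X b ω)^q * (X c ω)^r * (X d ω)^s ∂μ
      = (∫ ω, (X a ω)^p ∂μ) * (∫ ω, (X b ω)^q ∂μ) * (∫ ω, (X c ω)^r ∂μ)
        * ∫ ω, (X d ω)^s ∂μ := by
  classical
  set e : Fin n → ℕ := fun i => if i = a then p else if i = b then q else if i = c then r else s
    with he
  have hY : iIndepFun (fun i ω => (X i ω)^(e i)) μ :=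
    hXindep.comp (fun i x => x ^ (e i)) (fun i => measurable_id.pow_const _)
  have hYmeas : ∀ i, Measurable (fun ω => (X i ω)^(e i)) := fun i => (hXmeas i).pow_const _
  have hds : d ∉ ({a, b, c} : Finset (Fin n)) := by
    simp only [Finset.mem_insert, Finset.mem_singleton]
    push_neg
    exact ⟨Ne.symm had, Ne.symm hbd, Ne.symm hcd⟩
  have h2 := hY.indepFun_finsetProd_of_notMem hYmeas hds
  have hprod : (∏ j ∈ ({a, b, c} : Finset (Fin n)), (fun ω => (X j ω)^(e j)))
      = fun ω => (X a ω)^p * (X b ω)^q * (X c ω)^r := by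
    have hanotin : a ∉ ({b, c} : Finset (Fin n)) := by
      simp only [Finset.mem_insert, Finset.mem_singleton]
      push_neg
      exact ⟨hab, hac⟩
    rw [show ({a, b, c} : Finset (Fin n)) = insert a {b, c} from rfl,
      Finset.prod_insert hanotin, Finset.prod_pair hbc]
    funext ω
    simp only [Pi.mul_apply]
    have h1 : e a = p := by simp [he]
    have h2 : e b = q := by simp [he, Ne.symm hab]
    have h3 : e c = r := by simp [he, Ne.symm hac, Ne.symm hbc]
    rw [h1, h2, h3, mul_assoc]
  have hed : e d = s := by simp [he, Ne.symm had, Ne.symm hbd, Ne.symm hcd]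
  rw [hprod, hed] at h2
  have h3 := h2.integral_fun_mul_eq_mul_integral
    ((((hXmeas a).pow_const p).mul ((hXmeas b).pow_const q)).mul
      ((hXmeas c).pow_const r)).aestronglyMeasurable
    ((hXmeas d).pow_const s).aestronglyMeasurable
  rw [h3, int_pow_triple hXmeas hXindep hab hac hbc]

lemma moment_transfer {ν : Measure ℝ} (hXmeas : ∀ i, Measurable (X i))
    (hXid : ∀ i, Measure.map (X i) μ = ν) (i j : Fin n) (k : ℕ) :
    ∫ ω, (X i ω)^k ∂μ = ∫ ω, (X j ω)^k ∂μ := by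
  have h : ∀ i : Fin n, ∫ ω, (X i ω)^k ∂μ = ∫ x, x^k ∂ν := by
    intro i
    have hmg : Measurable fun x : ℝ => x ^ k := measurable_id.pow_const k
    rw [← hXid i, integral_map (hXmeas i).aemeasurable hmg.aestronglyMeasurable]
  rw [h i, h j]

lemma fin_sum_eq_single {f : Fin n → ℝ} (i : Fin n) (h : ∀ j, j ≠ i → f j = 0) :
    ∑ j, f j = f i :=
  Finset.sum_eq_single_of_mem i (Finset.mem_univ i) (fun b _ hb => h b hb)

lemma fin_sum_eq_two {f : Fin n → ℝ} {p q : Fin n} (hpq : p ≠ q)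
    (h : ∀ j, j ≠ p → j ≠ q → f j = 0) : ∑ j, f j = f p + f q := by
  rw [← Finset.add_sum_erase _ _ (Finset.mem_univ p)]
  congr 1
  apply Finset.sum_eq_single_of_mem q (Finset.mem_erase.2 ⟨hpq.symm, Finset.mem_univ q⟩)
  intro b hb hbq
  exact h b (Finset.ne_of_mem_erase hb) hbq

lemma fin_sum_const_split {f : Fin n → ℝ} (i : Fin n) {vA vB : ℝ} (hA : f i = vA)
    (hB : ∀ j, j ≠ i → f j = vB) (hn : 1 ≤ n) : ∑ j, f j = vA + ((n:ℝ) - 1) * vB := by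
  rw [← Finset.add_sum_erase _ _ (Finset.mem_univ i), hA,
    Finset.sum_congr rfl (fun j hj => hB j (Finset.ne_of_mem_erase hj)),
    Finset.sum_const, Finset.card_erase_of_mem (Finset.mem_univ i), Finset.card_univ,
    Fintype.card_fin, nsmul_eq_mul, Nat.cast_sub hn, Nat.cast_one]

end Helpers

/-- Variance over the sample of the conditional bootstrap mean:
`Var_L(E_U[v̂(L_U)]) = ((3−n)(n−1)/n³)·μ₂² + ((n−1)²/n³)·μ₄`. -/
theorem variance_of_conditional_bootstrap_mean
    {Ω : Type*} [MeasurableSpace Ω] (μ : Measure Ω) [IsProbabilityMeasure μ]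
    (n m : ℕ) [NeZero n] (hm : 2 ≤ m)
    (X : Fin n → Ω → ℝ) (hXmeas : ∀ i, Measurable (X i))
    (hXindep : iIndepFun X μ)
    (ν : Measure ℝ) (hXid : ∀ i, Measure.map (X i) μ = ν)
    (hL4 : ∀ i, MemLp (X i) 4 μ)
    (hcentered : ∫ ω, X ⟨0, Nat.pos_of_ne_zero (NeZero.ne n)⟩ ω ∂μ = 0)
    (μ₂ μ₄ : ℝ)
    (hμ₂ : μ₂ = ∫ ω, (X ⟨0, Nat.pos_of_ne_zero (NeZero.ne n)⟩ ω) ^ 2 ∂μ)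
    (hμ₄ : μ₄ = ∫ ω, (X ⟨0, Nat.pos_of_ne_zero (NeZero.ne n)⟩ ω) ^ 4 ∂μ) :
    variance (fun ω => ∫ u, vhatBoot n m X ω u ∂(unif n m)) μ
      = ((3 - (n : ℝ)) * ((n : ℝ) - 1) / (n : ℝ) ^ 3) * μ₂ ^ 2
        + (((n : ℝ) - 1) ^ 2 / (n : ℝ) ^ 3) * μ₄ := by
  classical
  have hn1 : 1 ≤ n := Nat.pos_of_ne_zero (NeZero.ne n)
  have hn : (n:ℝ) ≠ 0 := Nat.cast_ne_zero.2 (NeZero.ne n)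
  have hfun : (fun ω => ∫ u, vhatBoot n m X ω u ∂(unif n m))
      = fun ω => (n:ℝ)⁻¹ * ∑ i, (X i ω)^2 - ((n:ℝ)⁻¹)^2 * (∑ i, X i ω)^2 :=
    funext fun ω => integral_vhatBoot n m hm X ω
  rw [hfun]
  -- moments
  have mom : ∀ (i : Fin n) (k : ℕ), ∫ ω, (X i ω)^k ∂μ
      = ∫ ω, (X ⟨0, Nat.pos_of_ne_zero (NeZero.ne n)⟩ ω)^k ∂μ :=
    fun i k => moment_transfer hXmeas hXid i _ k
  have ev1 : ∀ i, ∫ ω, X i ω ∂μ = 0 := by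
    intro i
    have h := mom i 1
    simp only [pow_one] at h
    rw [h]; exact hcentered
  have ev2 : ∀ i, ∫ ω, (X i ω)^2 ∂μ = μ₂ := fun i => by rw [mom i 2, ← hμ₂]
  have ev4 : ∀ i, ∫ ω, (X i ω)^4 ∂μ = μ₄ := fun i => by rw [mom i 4, ← hμ₄]
  -- pairwise zero expectations
  have zpair : ∀ (i j : Fin n), i ≠ j → ∀ p : ℕ, ∫ ω, (X i ω)^p * (X j ω)^1 ∂μ = 0 := by
    intro i j hij p
    rw [int_pow_pair hXmeas hXindep hij]
    simp only [pow_one, ev1 j, mul_zero]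
  have ztriple : ∀ (i j k : Fin n), i ≠ j → i ≠ k → j ≠ k → ∀ p q : ℕ,
      ∫ ω, (X i ω)^p * (X j ω)^q * (X k ω)^1 ∂μ = 0 := by
    intro i j k hij hik hjk p q
    rw [int_pow_triple hXmeas hXindep hij hik hjk]
    simp only [pow_one, ev1 k, mul_zero]
  have v22 : ∀ (i j : Fin n), i ≠ j → ∫ ω, (X i ω)^2 * (X j ω)^2 ∂μ = μ₂ * μ₂ := by
    intro i j hij
    rw [int_pow_pair hXmeas hXindep hij, ev2, ev2]
  -- memℒp facts
  have hX2 : ∀ i, MemLp (X i) 2 μ := fun i => (hL4 i).mono_exponent (by norm_num)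
  have hm11L2 : ∀ i j, MemLp (fun ω => X i ω * X j ω) 2 μ := fun i j => L2mul (hL4 i) (hL4 j)
  have hsq2 : ∀ i, MemLp (fun ω => (X i ω)^2) 2 μ := by
    intro i
    rw [show (fun ω => (X i ω)^2) = fun ω => X i ω * X i ω from funext fun ω => sq (X i ω)]
    exact hm11L2 i i
  have Int2 : ∀ i j, Integrable (fun ω => X i ω * X j ω) μ := fun i j => L2int (hX2 i) (hX2 j)
  have Int22 : ∀ i j, Integrable (fun ω => (X i ω)^2 * (X j ω)^2) μ :=
    fun i j => L2int (hsq2 i) (hsq2 j)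
  have Int211 : ∀ i j k, Integrable (fun ω => (X i ω)^2 * (X j ω * X k ω)) μ :=
    fun i j k => L2int (hsq2 i) (hm11L2 j k)
  have Int1111 : ∀ i j k l, Integrable (fun ω => (X i ω * X j ω) * (X k ω * X l ω)) μ :=
    fun i j k l => L2int (hm11L2 i j) (hm11L2 k l)
  -- memℒp of the statistic
  have hS2L2 : MemLp (fun ω => ∑ i, (X i ω)^2) 2 μ :=
    memLp_finset_sum _ (fun i _ => hsq2 i)
  have hS1L4 : MemLp (fun ω => ∑ i, X i ω) 4 μ :=
    memLp_finset_sum _ (fun i _ => hL4 i)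
  have hS1sqL2 : MemLp (fun ω => (∑ i, X i ω)^2) 2 μ := by
    rw [show (fun ω => (∑ i, X i ω)^2) = fun ω => (∑ i, X i ω) * (∑ i, X i ω)
      from funext fun ω => sq _]
    exact L2mul hS1L4 hS1L4
  have hQ : MemLp (fun ω => (n:ℝ)⁻¹ * ∑ i, (X i ω)^2 - ((n:ℝ)⁻¹)^2 * (∑ i, X i ω)^2) 2 μ := by
    have := (hS2L2.const_mul ((n:ℝ)⁻¹)).sub (hS1sqL2.const_mul (((n:ℝ)⁻¹)^2))
    exact this
  rw [variance_eq_sub hQ]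
  -- expectation of Q
  have ES2 : ∫ ω, ∑ i, (X i ω)^2 ∂μ = (n:ℝ) * μ₂ := by
    rw [integral_finset_sum _ (fun i _ => (hsq2 i).integrable one_le_two)]
    rw [Finset.sum_congr rfl (fun i _ => ev2 i), Finset.sum_const, Finset.card_univ,
      Fintype.card_fin, nsmul_eq_mul]
  have ES1sq : ∫ ω, (∑ i, X i ω)^2 ∂μ = (n:ℝ) * μ₂ := by
    rw [show (fun ω => (∑ i, X i ω)^2) = fun ω => ∑ i, ∑ j, X i ω * X j ω
      from funext fun ω => by rw [pow_two, Finset.sum_mul_sum]]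
    rw [integral_finset_sum _ (fun i _ => integrable_finset_sum _ (fun j _ => Int2 i j))]
    have inner : ∀ i : Fin n, ∫ ω, ∑ j, X i ω * X j ω ∂μ = μ₂ := by
      intro i
      rw [integral_finset_sum _ (fun j _ => Int2 i j)]
      rw [fin_sum_eq_single (f := fun j => ∫ ω, X i ω * X j ω ∂μ) i (fun j hj => by
        show ∫ ω, X i ω * X j ω ∂μ = 0
        rw [show (fun ω => X i ω * X j ω) = fun ω => (X i ω)^1 * (X j ω)^1
          from funext fun ω => by ring]
        exact zpair i j (Ne.symm hj) 1)]
      show ∫ ω, X i ω * X i ω ∂μ = μ₂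
      rw [show (fun ω => X i ω * X i ω) = fun ω => (X i ω)^2 from funext fun ω => (sq _).symm]
      exact ev2 i
    rw [Finset.sum_congr rfl fun i _ => inner i, Finset.sum_const, Finset.card_univ,
      Fintype.card_fin, nsmul_eq_mul]
  have EQ : ∫ ω, ((n:ℝ)⁻¹ * ∑ i, (X i ω)^2 - ((n:ℝ)⁻¹)^2 * (∑ i, X i ω)^2) ∂μ
      = (n:ℝ)⁻¹ * ((n:ℝ) * μ₂) - ((n:ℝ)⁻¹)^2 * ((n:ℝ) * μ₂) := by
    rw [integral_sub ((integrable_finset_sum _ (fun i _ => (hsq2 i).integrable one_le_two)).const_mul _)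
      (((hS1sqL2.integrable one_le_two)).const_mul _)]
    rw [integral_const_mul, integral_const_mul, ES2, ES1sq]
  -- second moment of Q
  have EQ2 : ∫ ω, ((n:ℝ)⁻¹ * ∑ i, (X i ω)^2 - ((n:ℝ)⁻¹)^2 * (∑ i, X i ω)^2)^2 ∂μ
      = ((n:ℝ)⁻¹)^2 * ((n:ℝ) * (μ₄ + ((n:ℝ)-1) * (μ₂*μ₂)))
        - 2 * (n:ℝ)⁻¹ * ((n:ℝ)⁻¹)^2 * ((n:ℝ) * (μ₄ + ((n:ℝ)-1) * (μ₂*μ₂)))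
        + (((n:ℝ)⁻¹)^2)^2 * ((n:ℝ) * (μ₄ + 3*((n:ℝ)-1) * (μ₂*μ₂))) := by
    have zquad : ∀ (i j k l : Fin n), i ≠ j → i ≠ k → i ≠ l → j ≠ k → j ≠ l → k ≠ l →
        ∫ ω, (X i ω)^1 * (X j ω)^1 * (X k ω)^1 * (X l ω)^1 ∂μ = 0 := by
      intro i j k l hij hik hil hjk hjl hkl
      rw [int_pow_quad hXmeas hXindep hij hik hil hjk hjl hkl]
      simp only [pow_one, ev1 l, mul_zero]
    have eq1 : ∀ ω : Ω, (∑ i : Fin n, (X i ω)^2)^2 = ∑ i, ∑ j, (X i ω)^2 * (X j ω)^2 :=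
      fun ω => by rw [pow_two, Finset.sum_mul_sum]
    have eq2 : ∀ ω : Ω, (∑ i : Fin n, (X i ω)^2) * (∑ i, X i ω)^2
        = ∑ i, ∑ j, ∑ k, (X i ω)^2 * (X j ω * X k ω) := by
      intro ω
      rw [pow_two (∑ i : Fin n, X i ω), Finset.sum_mul_sum, Finset.sum_mul]
      simp only [Finset.mul_sum]
    have eq3 : ∀ ω : Ω, ((∑ i : Fin n, X i ω)^2)^2
        = ∑ i, ∑ j, ∑ k, ∑ l, (X i ω * X j ω) * (X k ω * X l ω) := by
      intro ω
      have w : (∑ i : Fin n, X i ω)^2 = ∑ i, ∑ j, X i ω * X j ω := by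
        rw [pow_two, Finset.sum_mul_sum]
      rw [pow_two ((∑ i : Fin n, X i ω)^2), w]
      simp only [Finset.sum_mul]
      simp only [Finset.mul_sum]
    have hQsq : (fun ω => ((n:ℝ)⁻¹ * ∑ i, (X i ω)^2 - ((n:ℝ)⁻¹)^2 * (∑ i, X i ω)^2)^2)
        = fun ω => (((n:ℝ)⁻¹)^2 * (∑ i, ∑ j, (X i ω)^2 * (X j ω)^2)
            - 2 * (n:ℝ)⁻¹ * ((n:ℝ)⁻¹)^2 * (∑ i, ∑ j, ∑ k, (X i ω)^2 * (X j ω * X k ω)))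
          + (((n:ℝ)⁻¹)^2)^2 * (∑ i, ∑ j, ∑ k, ∑ l, (X i ω * X j ω) * (X k ω * X l ω)) := by
      funext ω
      rw [← eq1 ω, ← eq2 ω, ← eq3 ω]
      ring
    have IntA : Integrable (fun ω => ∑ i, ∑ j, (X i ω)^2 * (X j ω)^2) μ :=
      integrable_finset_sum _ (fun i _ => integrable_finset_sum _ (fun j _ => Int22 i j))
    have IntB : Integrable (fun ω => ∑ i, ∑ j, ∑ k, (X i ω)^2 * (X j ω * X k ω)) μ :=
      integrable_finset_sum _ (fun i _ => integrable_finset_sum _ (fun j _ =>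
        integrable_finset_sum _ (fun k _ => Int211 i j k)))
    have IntC : Integrable (fun ω => ∑ i, ∑ j, ∑ k, ∑ l, (X i ω * X j ω) * (X k ω * X l ω)) μ :=
      integrable_finset_sum _ (fun i _ => integrable_finset_sum _ (fun j _ =>
        integrable_finset_sum _ (fun k _ => integrable_finset_sum _ (fun l _ => Int1111 i j k l))))
    have IntAB : Integrable (fun ω => ((n:ℝ)⁻¹)^2 * (∑ i, ∑ j, (X i ω)^2 * (X j ω)^2)
        - 2 * (n:ℝ)⁻¹ * ((n:ℝ)⁻¹)^2 * (∑ i, ∑ j, ∑ k, (X i ω)^2 * (X j ω * X k ω))) μ :=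
      (IntA.const_mul _).sub (IntB.const_mul _)
    have IntC' : Integrable (fun ω => (((n:ℝ)⁻¹)^2)^2
        * (∑ i, ∑ j, ∑ k, ∑ l, (X i ω * X j ω) * (X k ω * X l ω))) μ := IntC.const_mul _
    have IntA' : Integrable (fun ω => ((n:ℝ)⁻¹)^2 * (∑ i, ∑ j, (X i ω)^2 * (X j ω)^2)) μ :=
      IntA.const_mul _
    have IntB' : Integrable (fun ω => 2 * (n:ℝ)⁻¹ * ((n:ℝ)⁻¹)^2
        * (∑ i, ∑ j, ∑ k, (X i ω)^2 * (X j ω * X k ω))) μ := IntB.const_mul _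
    rw [hQsq, integral_add IntAB IntC', integral_sub IntA' IntB', integral_const_mul,
      integral_const_mul, integral_const_mul]
    have SA : ∫ ω, ∑ i, ∑ j, (X i ω)^2 * (X j ω)^2 ∂μ
        = (n:ℝ) * (μ₄ + ((n:ℝ)-1) * (μ₂*μ₂)) := by
      rw [integral_finset_sum _ (fun i _ => integrable_finset_sum _ (fun j _ => Int22 i j))]
      have hi : ∀ i : Fin n, ∫ ω, ∑ j, (X i ω)^2 * (X j ω)^2 ∂μ
          = μ₄ + ((n:ℝ)-1) * (μ₂*μ₂) := by
        intro i
        rw [integral_finset_sum _ (fun j _ => Int22 i j)]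
        refine fin_sum_const_split (f := fun j => ∫ ω, (X i ω)^2 * (X j ω)^2 ∂μ) i ?_ ?_ hn1
        · show ∫ ω, (X i ω)^2 * (X i ω)^2 ∂μ = μ₄
          rw [show (fun ω => (X i ω)^2 * (X i ω)^2) = fun ω => (X i ω)^4
            from funext fun ω => by ring]
          exact ev4 i
        · intro j hj
          exact v22 i j (Ne.symm hj)
      rw [Finset.sum_congr rfl fun i _ => hi i, Finset.sum_const, Finset.card_univ,
        Fintype.card_fin, nsmul_eq_mul]
    have SB : ∫ ω, ∑ i, ∑ j, ∑ k, (X i ω)^2 * (X j ω * X k ω) ∂μ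
        = (n:ℝ) * (μ₄ + ((n:ℝ)-1) * (μ₂*μ₂)) := by
      rw [integral_finset_sum _ (fun i _ => integrable_finset_sum _ (fun j _ =>
        integrable_finset_sum _ (fun k _ => Int211 i j k)))]
      have hi : ∀ i : Fin n, ∫ ω, ∑ j, ∑ k, (X i ω)^2 * (X j ω * X k ω) ∂μ
          = μ₄ + ((n:ℝ)-1) * (μ₂*μ₂) := by
        intro i
        rw [integral_finset_sum _ (fun j _ => integrable_finset_sum _ (fun k _ => Int211 i j k))]
        have hjin : ∀ j : Fin n, ∫ ω, ∑ k, (X i ω)^2 * (X j ω * X k ω) ∂μ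
            = if j = i then μ₄ else μ₂*μ₂ := by
          intro j
          rw [integral_finset_sum _ (fun k _ => Int211 i j k)]
          by_cases hji : j = i
          · subst hji
            rw [if_pos rfl]
            rw [fin_sum_eq_single (f := fun k => ∫ ω, (X j ω)^2 * (X j ω * X k ω) ∂μ) j
              (fun k hk => by
                show ∫ ω, (X j ω)^2 * (X j ω * X k ω) ∂μ = 0
                rw [show (fun ω => (X j ω)^2 * (X j ω * X k ω))
                  = fun ω => (X j ω)^3 * (X k ω)^1 from funext fun ω => by ring]
                exact zpair j k (Ne.symm hk) 3)]
            show ∫ ω, (X j ω)^2 * (X j ω * X j ω) ∂μ = μ₄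
            rw [show (fun ω => (X j ω)^2 * (X j ω * X j ω)) = fun ω => (X j ω)^4
              from funext fun ω => by ring]
            exact ev4 j
          · rw [if_neg hji]
            rw [fin_sum_eq_single (f := fun k => ∫ ω, (X i ω)^2 * (X j ω * X k ω) ∂μ) j
              (fun k hk => by
                show ∫ ω, (X i ω)^2 * (X j ω * X k ω) ∂μ = 0
                by_cases hki : k = i
                · subst hki
                  rw [show (fun ω => (X k ω)^2 * (X j ω * X k ω))
                    = fun ω => (X k ω)^3 * (X j ω)^1 from funext fun ω => by ring]
                  exact zpair k j (fun h => hji h.symm) 3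
                · rw [show (fun ω => (X i ω)^2 * (X j ω * X k ω))
                    = fun ω => (X i ω)^2 * (X j ω)^1 * (X k ω)^1 from funext fun ω => by ring]
                  exact ztriple i j k (fun h => hji h.symm) (fun h => hki h.symm) (Ne.symm hk) 2 1)]
            show ∫ ω, (X i ω)^2 * (X j ω * X j ω) ∂μ = μ₂ * μ₂
            rw [show (fun ω => (X i ω)^2 * (X j ω * X j ω)) = fun ω => (X i ω)^2 * (X j ω)^2
              from funext fun ω => by ring]
            exact v22 i j (fun h => hji h.symm)
        rw [Finset.sum_congr rfl fun j _ => hjin j]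
        rw [fin_sum_const_split (f := fun j => if j = i then μ₄ else μ₂*μ₂) i (if_pos rfl)
          (fun j hj => if_neg hj) hn1]
      rw [Finset.sum_congr rfl fun i _ => hi i, Finset.sum_const, Finset.card_univ,
        Fintype.card_fin, nsmul_eq_mul]
    have SC : ∫ ω, ∑ i, ∑ j, ∑ k, ∑ l, (X i ω * X j ω) * (X k ω * X l ω) ∂μ
        = (n:ℝ) * (μ₄ + 3*((n:ℝ)-1) * (μ₂*μ₂)) := by
      rw [integral_finset_sum _ (fun i _ => integrable_finset_sum _ (fun j _ =>
        integrable_finset_sum _ (fun k _ => integrable_finset_sum _ (fun l _ => Int1111 i j k l))))]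
      have hi : ∀ i : Fin n, ∫ ω, ∑ j, ∑ k, ∑ l, (X i ω * X j ω) * (X k ω * X l ω) ∂μ
          = (μ₄ + ((n:ℝ)-1) * (μ₂*μ₂)) + ((n:ℝ)-1) * (μ₂*μ₂ + μ₂*μ₂) := by
        intro i
        rw [integral_finset_sum _ (fun j _ => integrable_finset_sum _ (fun k _ =>
          integrable_finset_sum _ (fun l _ => Int1111 i j k l)))]
        have hj : ∀ j : Fin n, ∫ ω, ∑ k, ∑ l, (X i ω * X j ω) * (X k ω * X l ω) ∂μ
            = if j = i then μ₄ + ((n:ℝ)-1) * (μ₂*μ₂) else μ₂*μ₂ + μ₂*μ₂ := by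
          intro j
          rw [integral_finset_sum _ (fun k _ =>
            integrable_finset_sum _ (fun l _ => Int1111 i j k l))]
          by_cases hji : j = i
          · subst hji
            rw [if_pos rfl]
            have hk : ∀ k : Fin n, ∫ ω, ∑ l, (X j ω * X j ω) * (X k ω * X l ω) ∂μ
                = if k = j then μ₄ else μ₂*μ₂ := by
              intro k
              rw [integral_finset_sum _ (fun l _ => Int1111 j j k l)]
              by_cases hkj : k = j
              · subst hkj
                rw [if_pos rfl]
                rw [fin_sum_eq_single
                  (f := fun l => ∫ ω, (X k ω * X k ω) * (X k ω * X l ω) ∂μ) k (fun l hl => by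
                    show ∫ ω, (X k ω * X k ω) * (X k ω * X l ω) ∂μ = 0
                    rw [show (fun ω => (X k ω * X k ω) * (X k ω * X l ω))
                      = fun ω => (X k ω)^3 * (X l ω)^1 from funext fun ω => by ring]
                    exact zpair k l (Ne.symm hl) 3)]
                show ∫ ω, (X k ω * X k ω) * (X k ω * X k ω) ∂μ = μ₄
                rw [show (fun ω => (X k ω * X k ω) * (X k ω * X k ω)) = fun ω => (X k ω)^4
                  from funext fun ω => by ring]
                exact ev4 k
              · rw [if_neg hkj]
                rw [fin_sum_eq_single
                  (f := fun l => ∫ ω, (X j ω * X j ω) * (X k ω * X l ω) ∂μ) k (fun l hl => by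
                    show ∫ ω, (X j ω * X j ω) * (X k ω * X l ω) ∂μ = 0
                    by_cases hlj : l = j
                    · subst hlj
                      rw [show (fun ω => (X l ω * X l ω) * (X k ω * X l ω))
                        = fun ω => (X l ω)^3 * (X k ω)^1 from funext fun ω => by ring]
                      exact zpair l k (fun h => hkj h.symm) 3
                    · rw [show (fun ω => (X j ω * X j ω) * (X k ω * X l ω))
                        = fun ω => (X j ω)^2 * (X k ω)^1 * (X l ω)^1
                        from funext fun ω => by ring]
                      exact ztriple j k l (fun h => hkj h.symm) (fun h => hlj h.symm)
                        (Ne.symm hl) 2 1)]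
                show ∫ ω, (X j ω * X j ω) * (X k ω * X k ω) ∂μ = μ₂ * μ₂
                rw [show (fun ω => (X j ω * X j ω) * (X k ω * X k ω))
                  = fun ω => (X j ω)^2 * (X k ω)^2 from funext fun ω => by ring]
                exact v22 j k (fun h => hkj h.symm)
            rw [Finset.sum_congr rfl fun k _ => hk k,
              fin_sum_const_split (f := fun k => if k = j then μ₄ else μ₂*μ₂) j (if_pos rfl)
                (fun k hk' => if_neg hk') hn1]
          · rw [if_neg hji]
            have hij : i ≠ j := fun h => hji h.symm
            have hk : ∀ k : Fin n, ∫ ω, ∑ l, (X i ω * X j ω) * (X k ω * X l ω) ∂μ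
                = if k = i then μ₂*μ₂ else if k = j then μ₂*μ₂ else 0 := by
              intro k
              rw [integral_finset_sum _ (fun l _ => Int1111 i j k l)]
              by_cases hki : k = i
              · subst hki
                rw [if_pos rfl]
                rw [fin_sum_eq_single
                  (f := fun l => ∫ ω, (X k ω * X j ω) * (X k ω * X l ω) ∂μ) j (fun l hl => by
                    show ∫ ω, (X k ω * X j ω) * (X k ω * X l ω) ∂μ = 0
                    by_cases hlk : l = k
                    · subst hlk
                      rw [show (fun ω => (X l ω * X j ω) * (X l ω * X l ω))
                        = fun ω => (X l ω)^3 * (X j ω)^1 from funext fun ω => by ring]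
                      exact zpair l j (fun h => hji h.symm) 3
                    · rw [show (fun ω => (X k ω * X j ω) * (X k ω * X l ω))
                        = fun ω => (X k ω)^2 * (X j ω)^1 * (X l ω)^1
                        from funext fun ω => by ring]
                      exact ztriple k j l (fun h => hji h.symm) (fun h => hlk h.symm)
                        (Ne.symm hl) 2 1)]
                show ∫ ω, (X k ω * X j ω) * (X k ω * X j ω) ∂μ = μ₂ * μ₂
                rw [show (fun ω => (X k ω * X j ω) * (X k ω * X j ω))
                  = fun ω => (X k ω)^2 * (X j ω)^2 from funext fun ω => by ring]
                exact v22 k j (fun h => hji h.symm)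
              · rw [if_neg hki]
                by_cases hkj : k = j
                · subst hkj
                  rw [if_pos rfl]
                  rw [fin_sum_eq_single
                    (f := fun l => ∫ ω, (X i ω * X k ω) * (X k ω * X l ω) ∂μ) i (fun l hl => by
                      show ∫ ω, (X i ω * X k ω) * (X k ω * X l ω) ∂μ = 0
                      by_cases hlk : l = k
                      · subst hlk
                        rw [show (fun ω => (X i ω * X l ω) * (X l ω * X l ω))
                          = fun ω => (X l ω)^3 * (X i ω)^1 from funext fun ω => by ring]
                        exact zpair l i hki 3
                      · rw [show (fun ω => (X i ω * X k ω) * (X k ω * X l ω))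
                          = fun ω => (X i ω)^1 * (X k ω)^2 * (X l ω)^1
                          from funext fun ω => by ring]
                        exact ztriple i k l (fun h => hki h.symm) (fun h => hl h.symm)
                          (fun h => hlk h.symm) 1 2)]
                  show ∫ ω, (X i ω * X k ω) * (X k ω * X i ω) ∂μ = μ₂ * μ₂
                  rw [show (fun ω => (X i ω * X k ω) * (X k ω * X i ω))
                    = fun ω => (X i ω)^2 * (X k ω)^2 from funext fun ω => by ring]
                  exact v22 i k (fun h => hki h.symm)
                · rw [if_neg hkj]
                  apply Finset.sum_eq_zero
                  intro l _
                  show ∫ ω, (X i ω * X j ω) * (X k ω * X l ω) ∂μ = 0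
                  by_cases hli : l = i
                  · subst hli
                    rw [show (fun ω => (X l ω * X j ω) * (X k ω * X l ω))
                      = fun ω => (X l ω)^2 * (X j ω)^1 * (X k ω)^1
                      from funext fun ω => by ring]
                    exact ztriple l j k (fun h => hji h.symm) (fun h => hki h.symm)
                      (fun h => hkj h.symm) 2 1
                  · by_cases hlj : l = j
                    · subst hlj
                      rw [show (fun ω => (X i ω * X l ω) * (X k ω * X l ω))
                        = fun ω => (X l ω)^2 * (X i ω)^1 * (X k ω)^1
                        from funext fun ω => by ring]
                      exact ztriple l i k hli (fun h => hkj h.symm)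
                        (fun h => hki h.symm) 2 1
                    · by_cases hlk : l = k
                      · subst hlk
                        rw [show (fun ω => (X i ω * X j ω) * (X l ω * X l ω))
                          = fun ω => (X l ω)^2 * (X i ω)^1 * (X j ω)^1
                          from funext fun ω => by ring]
                        exact ztriple l i j hli hlj hij 2 1
                      · rw [show (fun ω => (X i ω * X j ω) * (X k ω * X l ω))
                          = fun ω => (X i ω)^1 * (X j ω)^1 * (X k ω)^1 * (X l ω)^1
                          from funext fun ω => by ring]
                        exact zquad i j k l hij (fun h => hki h.symm) (Ne.symm hli)
                          (fun h => hkj h.symm) (Ne.symm hlj) (Ne.symm hlk)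
            rw [Finset.sum_congr rfl fun k _ => hk k,
              fin_sum_eq_two (f := fun k => if k = i then μ₂*μ₂ else if k = j then μ₂*μ₂ else 0)
                hij (fun k hk1 hk2 => by
                  show (if k = i then μ₂*μ₂ else if k = j then μ₂*μ₂ else 0) = 0
                  rw [if_neg hk1, if_neg hk2])]
            simp [hji]
        rw [Finset.sum_congr rfl fun j _ => hj j,
          fin_sum_const_split (f := fun j => if j = i then μ₄ + ((n:ℝ)-1) * (μ₂*μ₂)
            else μ₂*μ₂ + μ₂*μ₂) i (if_pos rfl) (fun j hj' => if_neg hj') hn1]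
      rw [Finset.sum_congr rfl fun i _ => hi i, Finset.sum_const, Finset.card_univ,
        Fintype.card_fin, nsmul_eq_mul]
      ring
    rw [SA, SB, SC]
  simp only [Pi.pow_apply] at *
  rw [EQ2, EQ]
  field_simp
  ring
end

section
/- For i.i.d. centered X_1,...,X_n with finite fourth moment and bootstrap samples of size m ≥ 2, the expected conditional variance of the bootstrap sample variance is E_L[Var_U(v̂(L_U))] = ((n−1)/(n m(m−1)))·[(3m − 3 + ((n² − 2n + 3)/n²)(6 − 4m))·μ₂² + (m − 1 + ((n−1)/n²)(6 − 4m))·μ₄]. -/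
open MeasureTheory ProbabilityTheory Finset

set_option linter.unusedSectionVars false

namespace BootAux

variable {ι : Type*} [Fintype ι] [DecidableEq ι]

/-- indicator exponent -/
def dd (j t : ι) : ℕ := if t = j then 1 else 0

lemma sum_dd (j : ι) : ∑ t, dd j t = 1 := by simp [dd]

lemma prod_pow_add {R : Type*} [CommMonoid R] (h : ι → R) (e₁ e₂ : ι → ℕ) :
    ∏ t, h t ^ (e₁ t + e₂ t) = (∏ t, h t ^ e₁ t) * ∏ t, h t ^ e₂ t := by
  rw [← Finset.prod_mul_distrib]; exact Finset.prod_congr rfl fun t _ => pow_add _ _ _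

lemma prod_pow_dd {R : Type*} [CommMonoid R] (h : ι → R) (j : ι) (a : ℕ) :
    ∏ t, h t ^ (a * dd j t) = h j ^ a := by
  rw [Finset.prod_eq_single j]
  · simp [dd]
  · intro b _ hb; simp [dd, hb]
  · intro hj; exact absurd (Finset.mem_univ j) hj

lemma prod_pow_dd' {R : Type*} [CommMonoid R] (h : ι → R) (j : ι) :
    ∏ t, h t ^ dd j t = h j := by
  have := prod_pow_dd h j 1
  simpa using this

lemma prod_dd2 {R : Type*} [CommMonoid R] (h : ι → R) (j k : ι) (a b : ℕ) :
    ∏ t, h t ^ (a * dd j t + b * dd k t) = h j ^ a * h k ^ b := by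
  rw [prod_pow_add, prod_pow_dd, prod_pow_dd]

lemma prod_dd3 {R : Type*} [CommMonoid R] (h : ι → R) (j k l : ι) :
    ∏ t, h t ^ (2 * dd j t + dd k t + dd l t) = h j ^ 2 * h k * h l := by
  rw [prod_pow_add, prod_pow_add, prod_pow_dd, prod_pow_dd', prod_pow_dd']

lemma prod_dd4 {R : Type*} [CommMonoid R] (h : ι → R) (j k l r : ι) :
    ∏ t, h t ^ (dd j t + dd k t + dd l t + dd r t) = h j * h k * h l * h r := by
  rw [prod_pow_add, prod_pow_add, prod_pow_add, prod_pow_dd', prod_pow_dd', prod_pow_dd',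
    prod_pow_dd']

section Count

variable (Φ : (ι → ℕ) → ℝ) (Q : ℕ → ℝ) (hQ0 : Q 0 = 1)
variable (Mom : ∀ e : ι → ℕ, (∑ t, e t) ≤ 4 → Φ e = ∏ t, Q (e t))

include hQ0 Mom

lemma ph1 (j : ι) (a : ℕ) (ha : a ≤ 4) : Φ (fun t => a * dd j t) = Q a := by
  rw [Mom _ (by rw [← Finset.mul_sum, sum_dd, mul_one]; exact ha)]
  rw [Finset.prod_eq_single j]
  · simp [dd]
  · intro b _ hb; simp [dd, hb, hQ0]
  · intro hj; exact absurd (Finset.mem_univ j) hj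

lemma ph2 {j k : ι} (hjk : j ≠ k) (a b : ℕ) (hab : a + b ≤ 4) :
    Φ (fun t => a * dd j t + b * dd k t) = Q a * Q b := by
  rw [Mom _ (by
    rw [Finset.sum_add_distrib, ← Finset.mul_sum, ← Finset.mul_sum, sum_dd, sum_dd]
    simpa using hab)]
  rw [← Finset.prod_subset (Finset.subset_univ ({j, k} : Finset ι))
    (fun x _ hx => by
      simp only [Finset.mem_insert, Finset.mem_singleton, not_or] at hx
      simp [dd, hx.1, hx.2, hQ0])]
  rw [Finset.prod_insert (by simpa using hjk), Finset.prod_singleton]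
  simp [dd, hjk, hjk.symm]

lemma ph3 {j k l : ι} (hjk : j ≠ k) (hjl : j ≠ l) (hkl : k ≠ l) (a b c : ℕ)
    (habc : a + b + c ≤ 4) :
    Φ (fun t => a * dd j t + b * dd k t + c * dd l t) = Q a * Q b * Q c := by
  rw [Mom _ (by
    rw [Finset.sum_add_distrib, Finset.sum_add_distrib, ← Finset.mul_sum, ← Finset.mul_sum,
      ← Finset.mul_sum, sum_dd, sum_dd, sum_dd]
    simpa using habc)]
  rw [← Finset.prod_subset (Finset.subset_univ ({j, k, l} : Finset ι))
    (fun x _ hx => by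
      simp only [Finset.mem_insert, Finset.mem_singleton, not_or] at hx
      simp [dd, hx.1, hx.2.1, hx.2.2, hQ0])]
  rw [Finset.prod_insert (by simp [hjk, hjl]), Finset.prod_insert (by simpa using hkl),
    Finset.prod_singleton]
  simp [dd, hjk, hjk.symm, hjl, hjl.symm, hkl, hkl.symm]
  ring

lemma ph4 {j k l r : ι} (hjk : j ≠ k) (hjl : j ≠ l) (hjr : j ≠ r) (hkl : k ≠ l) (hkr : k ≠ r)
    (hlr : l ≠ r) (a b c d : ℕ) (habcd : a + b + c + d ≤ 4) :
    Φ (fun t => a * dd j t + b * dd k t + c * dd l t + d * dd r t) = Q a * Q b * Q c * Q d := by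
  rw [Mom _ (by
    rw [Finset.sum_add_distrib, Finset.sum_add_distrib, Finset.sum_add_distrib,
      ← Finset.mul_sum, ← Finset.mul_sum, ← Finset.mul_sum, ← Finset.mul_sum,
      sum_dd, sum_dd, sum_dd, sum_dd]
    simpa using habcd)]
  rw [← Finset.prod_subset (Finset.subset_univ ({j, k, l, r} : Finset ι))
    (fun x _ hx => by
      simp only [Finset.mem_insert, Finset.mem_singleton, not_or] at hx
      simp [dd, hx.1, hx.2.1, hx.2.2.1, hx.2.2.2, hQ0])]
  rw [Finset.prod_insert (by simp [hjk, hjl, hjr]), Finset.prod_insert (by simp [hkl, hkr]),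
    Finset.prod_insert (by simpa using hlr), Finset.prod_singleton]
  simp [dd, hjk, hjk.symm, hjl, hjl.symm, hjr, hjr.symm, hkl, hkl.symm, hkr, hkr.symm,
    hlr, hlr.symm]
  ring

lemma count2 (a b : ℕ) (hab : a + b ≤ 4) :
    ∑ j, ∑ k, Φ (fun t => a * dd j t + b * dd k t)
      = (Fintype.card ι : ℝ) * Q (a + b)
        + (Fintype.card ι : ℝ) * ((Fintype.card ι - 1 : ℕ) : ℝ) * (Q a * Q b) := by
  have inner : ∀ j : ι, ∑ k, Φ (fun t => a * dd j t + b * dd k t)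
      = Q (a + b) + ((Fintype.card ι - 1 : ℕ) : ℝ) * (Q a * Q b) := by
    intro j
    rw [← Finset.add_sum_erase Finset.univ _ (Finset.mem_univ j)]
    congr 1
    · have he : (fun t => a * dd j t + b * dd j t) = fun t => (a + b) * dd j t := by
        funext t; ring
      rw [he, ph1 Φ Q hQ0 Mom j (a + b) hab]
    · rw [Finset.sum_congr rfl (fun k hk =>
        ph2 Φ Q hQ0 Mom (Ne.symm (Finset.ne_of_mem_erase hk)) a b hab),
        Finset.sum_const, Finset.card_erase_of_mem (Finset.mem_univ j), Finset.card_univ,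
        nsmul_eq_mul]
  rw [Finset.sum_congr rfl (fun j _ => inner j), Finset.sum_const, Finset.card_univ,
    nsmul_eq_mul, mul_add, ← mul_assoc]

lemma sumr1 (j : ι) (a : ℕ) (ha : a + 1 ≤ 4) :
    ∑ r, Φ (fun t => a * dd j t + dd r t)
      = Q (a + 1) + ((Fintype.card ι - 1 : ℕ) : ℝ) * (Q a * Q 1) := by
  rw [← Finset.add_sum_erase Finset.univ _ (Finset.mem_univ j)]
  congr 1
  · have he : (fun t => a * dd j t + dd j t) = fun t => (a + 1) * dd j t := by
      funext t; ring
    rw [he, ph1 Φ Q hQ0 Mom j (a + 1) ha]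
  · rw [Finset.sum_congr rfl (fun r hr => by
      have he : (fun t => a * dd j t + dd r t) = fun t => a * dd j t + 1 * dd r t := by
        funext t; ring
      rw [he, ph2 Φ Q hQ0 Mom (Ne.symm (Finset.ne_of_mem_erase hr)) a 1 ha]),
      Finset.sum_const, Finset.card_erase_of_mem (Finset.mem_univ j), Finset.card_univ,
      nsmul_eq_mul]

lemma sumr2 {j k : ι} (hjk : j ≠ k) (a b : ℕ) (hab : a + b + 1 ≤ 4) :
    ∑ r, Φ (fun t => a * dd j t + b * dd k t + dd r t)
      = Q (a + 1) * Q b + Q a * Q (b + 1)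
        + ((Fintype.card ι - 2 : ℕ) : ℝ) * (Q a * Q b * Q 1) := by
  have hk1 : k ∈ Finset.univ.erase j := Finset.mem_erase.2 ⟨hjk.symm, Finset.mem_univ k⟩
  have hcard : ((Finset.univ.erase j).erase k).card = Fintype.card ι - 2 := by
    rw [Finset.card_erase_of_mem hk1, Finset.card_erase_of_mem (Finset.mem_univ j),
      Finset.card_univ]
    omega
  rw [← Finset.add_sum_erase Finset.univ _ (Finset.mem_univ j),
    ← Finset.add_sum_erase _ _ hk1]
  have e1 : (fun t => a * dd j t + b * dd k t + dd j t) = fun t => (a + 1) * dd j t + b * dd k t := by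
    funext t; ring
  rw [e1, ph2 Φ Q hQ0 Mom hjk (a + 1) b (by omega)]
  have e2 : (fun t => a * dd j t + b * dd k t + dd k t) = fun t => a * dd j t + (b + 1) * dd k t := by
    funext t; ring
  rw [e2, ph2 Φ Q hQ0 Mom hjk a (b + 1) (by omega)]
  rw [Finset.sum_congr rfl (fun r hr => by
    have hrk : r ≠ k := Finset.ne_of_mem_erase hr
    have hrj : r ≠ j := Finset.ne_of_mem_erase (Finset.mem_of_mem_erase hr)
    have he : (fun t => a * dd j t + b * dd k t + dd r t)
        = fun t => a * dd j t + b * dd k t + 1 * dd r t := by funext t; ring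
    rw [he, ph3 Φ Q hQ0 Mom hjk hrj.symm hrk.symm a b 1 hab]),
    Finset.sum_const, hcard, nsmul_eq_mul]
  ring

lemma sumr3 {j k l : ι} (hjk : j ≠ k) (hjl : j ≠ l) (hkl : k ≠ l) :
    ∑ r, Φ (fun t => dd j t + dd k t + dd l t + dd r t)
      = 3 * (Q 2 * Q 1 * Q 1)
        + ((Fintype.card ι - 3 : ℕ) : ℝ) * (Q 1 * Q 1 * Q 1 * Q 1) := by
  have hk1 : k ∈ Finset.univ.erase j := Finset.mem_erase.2 ⟨hjk.symm, Finset.mem_univ k⟩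
  have hl1 : l ∈ (Finset.univ.erase j).erase k :=
    Finset.mem_erase.2 ⟨hkl.symm, Finset.mem_erase.2 ⟨hjl.symm, Finset.mem_univ l⟩⟩
  have hcard : (((Finset.univ.erase j).erase k).erase l).card = Fintype.card ι - 3 := by
    rw [Finset.card_erase_of_mem hl1, Finset.card_erase_of_mem hk1,
      Finset.card_erase_of_mem (Finset.mem_univ j), Finset.card_univ]
    omega
  rw [← Finset.add_sum_erase Finset.univ _ (Finset.mem_univ j),
    ← Finset.add_sum_erase _ _ hk1, ← Finset.add_sum_erase _ _ hl1]
  have e1 : (fun t => dd j t + dd k t + dd l t + dd j t)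
      = fun t => 2 * dd j t + 1 * dd k t + 1 * dd l t := by funext t; ring
  rw [e1, ph3 Φ Q hQ0 Mom hjk hjl hkl 2 1 1 (by omega)]
  have e2 : (fun t => dd j t + dd k t + dd l t + dd k t)
      = fun t => 1 * dd j t + 2 * dd k t + 1 * dd l t := by funext t; ring
  rw [e2, ph3 Φ Q hQ0 Mom hjk hjl hkl 1 2 1 (by omega)]
  have e3 : (fun t => dd j t + dd k t + dd l t + dd l t)
      = fun t => 1 * dd j t + 1 * dd k t + 2 * dd l t := by funext t; ring
  rw [e3, ph3 Φ Q hQ0 Mom hjk hjl hkl 1 1 2 (by omega)]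
  rw [Finset.sum_congr rfl (fun r hr => by
    have hrl : r ≠ l := Finset.ne_of_mem_erase hr
    have hrk : r ≠ k := Finset.ne_of_mem_erase (Finset.mem_of_mem_erase hr)
    have hrj : r ≠ j := Finset.ne_of_mem_erase (Finset.mem_of_mem_erase (Finset.mem_of_mem_erase hr))
    have he : (fun t => dd j t + dd k t + dd l t + dd r t)
        = fun t => 1 * dd j t + 1 * dd k t + 1 * dd l t + 1 * dd r t := by funext t; ring
    rw [he, ph4 Φ Q hQ0 Mom hjk hjl hrj.symm hkl hrk.symm hrl.symm 1 1 1 1 (by omega)]),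
    Finset.sum_const, hcard, nsmul_eq_mul]
  ring

lemma count3 :
    ∑ j, ∑ k, ∑ l, Φ (fun t => 2 * dd j t + dd k t + dd l t)
      = (Fintype.card ι : ℝ) * Q 4
        + 2 * (Fintype.card ι : ℝ) * ((Fintype.card ι - 1 : ℕ) : ℝ) * (Q 3 * Q 1)
        + (Fintype.card ι : ℝ) * ((Fintype.card ι - 1 : ℕ) : ℝ) * (Q 2 * Q 2)
        + (Fintype.card ι : ℝ) * ((Fintype.card ι - 1 : ℕ) : ℝ)
          * ((Fintype.card ι - 2 : ℕ) : ℝ) * (Q 2 * Q 1 * Q 1) := by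
  have hdiag : ∀ j : ι, ∑ l, Φ (fun t => 2 * dd j t + dd j t + dd l t)
      = Q 4 + ((Fintype.card ι - 1 : ℕ) : ℝ) * (Q 3 * Q 1) := by
    intro j
    rw [Finset.sum_congr rfl (fun l _ =>
      congrArg Φ (funext fun t => by ring :
        (fun t => 2 * dd j t + dd j t + dd l t) = fun t => 3 * dd j t + dd l t)),
      sumr1 Φ Q hQ0 Mom j 3 (by omega)]
  have hoff : ∀ j k : ι, j ≠ k → ∑ l, Φ (fun t => 2 * dd j t + dd k t + dd l t)
      = Q 3 * Q 1 + Q 2 * Q 2 + ((Fintype.card ι - 2 : ℕ) : ℝ) * (Q 2 * Q 1 * Q 1) := by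
    intro j k hjk
    rw [Finset.sum_congr rfl (fun l _ =>
      congrArg Φ (funext fun t => by ring :
        (fun t => 2 * dd j t + dd k t + dd l t) = fun t => 2 * dd j t + 1 * dd k t + dd l t)),
      sumr2 Φ Q hQ0 Mom hjk 2 1 (by omega)]
  have inner : ∀ j : ι, ∑ k, ∑ l, Φ (fun t => 2 * dd j t + dd k t + dd l t)
      = (Q 4 + ((Fintype.card ι - 1 : ℕ) : ℝ) * (Q 3 * Q 1))
        + ((Fintype.card ι - 1 : ℕ) : ℝ)
          * (Q 3 * Q 1 + Q 2 * Q 2 + ((Fintype.card ι - 2 : ℕ) : ℝ) * (Q 2 * Q 1 * Q 1)) := by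
    intro j
    rw [← Finset.add_sum_erase Finset.univ _ (Finset.mem_univ j), hdiag j,
      Finset.sum_congr rfl (fun k hk => hoff j k (Finset.ne_of_mem_erase hk).symm),
      Finset.sum_const, Finset.card_erase_of_mem (Finset.mem_univ j), Finset.card_univ,
      nsmul_eq_mul]
  rw [Finset.sum_congr rfl (fun j _ => inner j), Finset.sum_const, Finset.card_univ,
    nsmul_eq_mul]
  ring

lemma count4 :
    ∑ j, ∑ k, ∑ l, ∑ r, Φ (fun t => dd j t + dd k t + dd l t + dd r t)
      = (Fintype.card ι : ℝ) * Q 4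
        + 4 * (Fintype.card ι : ℝ) * ((Fintype.card ι - 1 : ℕ) : ℝ) * (Q 3 * Q 1)
        + 3 * (Fintype.card ι : ℝ) * ((Fintype.card ι - 1 : ℕ) : ℝ) * (Q 2 * Q 2)
        + 6 * (Fintype.card ι : ℝ) * ((Fintype.card ι - 1 : ℕ) : ℝ)
          * ((Fintype.card ι - 2 : ℕ) : ℝ) * (Q 2 * Q 1 * Q 1)
        + (Fintype.card ι : ℝ) * ((Fintype.card ι - 1 : ℕ) : ℝ)
          * ((Fintype.card ι - 2 : ℕ) : ℝ) * ((Fintype.card ι - 3 : ℕ) : ℝ)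
          * (Q 1 * Q 1 * Q 1 * Q 1) := by
  have h3j : ∀ j : ι, ∑ r, Φ (fun t => dd j t + dd j t + dd j t + dd r t)
      = Q 4 + ((Fintype.card ι - 1 : ℕ) : ℝ) * (Q 3 * Q 1) := by
    intro j
    rw [Finset.sum_congr rfl (fun r _ =>
      congrArg Φ (funext fun t => by ring :
        (fun t => dd j t + dd j t + dd j t + dd r t) = fun t => 3 * dd j t + dd r t)),
      sumr1 Φ Q hQ0 Mom j 3 (by omega)]
  have h2jl : ∀ j l : ι, j ≠ l → ∑ r, Φ (fun t => dd j t + dd j t + dd l t + dd r t)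
      = Q 3 * Q 1 + Q 2 * Q 2 + ((Fintype.card ι - 2 : ℕ) : ℝ) * (Q 2 * Q 1 * Q 1) := by
    intro j l hjl
    rw [Finset.sum_congr rfl (fun r _ =>
      congrArg Φ (funext fun t => by ring :
        (fun t => dd j t + dd j t + dd l t + dd r t) = fun t => 2 * dd j t + 1 * dd l t + dd r t)),
      sumr2 Φ Q hQ0 Mom hjl 2 1 (by omega)]
  have h2jk1 : ∀ j k : ι, j ≠ k → ∑ r, Φ (fun t => dd j t + dd k t + dd j t + dd r t)
      = Q 3 * Q 1 + Q 2 * Q 2 + ((Fintype.card ι - 2 : ℕ) : ℝ) * (Q 2 * Q 1 * Q 1) := by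
    intro j k hjk
    rw [Finset.sum_congr rfl (fun r _ =>
      congrArg Φ (funext fun t => by ring :
        (fun t => dd j t + dd k t + dd j t + dd r t) = fun t => 2 * dd j t + 1 * dd k t + dd r t)),
      sumr2 Φ Q hQ0 Mom hjk 2 1 (by omega)]
  have h2jk2 : ∀ j k : ι, j ≠ k → ∑ r, Φ (fun t => dd j t + dd k t + dd k t + dd r t)
      = Q 2 * Q 2 + Q 1 * Q 3 + ((Fintype.card ι - 2 : ℕ) : ℝ) * (Q 1 * Q 2 * Q 1) := by
    intro j k hjk
    rw [Finset.sum_congr rfl (fun r _ =>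
      congrArg Φ (funext fun t => by ring :
        (fun t => dd j t + dd k t + dd k t + dd r t) = fun t => 1 * dd j t + 2 * dd k t + dd r t)),
      sumr2 Φ Q hQ0 Mom hjk 1 2 (by omega)]
  have suml_jj : ∀ j : ι, ∑ l, ∑ r, Φ (fun t => dd j t + dd j t + dd l t + dd r t)
      = (Q 4 + ((Fintype.card ι - 1 : ℕ) : ℝ) * (Q 3 * Q 1))
        + ((Fintype.card ι - 1 : ℕ) : ℝ)
          * (Q 3 * Q 1 + Q 2 * Q 2 + ((Fintype.card ι - 2 : ℕ) : ℝ) * (Q 2 * Q 1 * Q 1)) := by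
    intro j
    rw [← Finset.add_sum_erase Finset.univ _ (Finset.mem_univ j), h3j j,
      Finset.sum_congr rfl (fun l hl => h2jl j l (Finset.ne_of_mem_erase hl).symm),
      Finset.sum_const, Finset.card_erase_of_mem (Finset.mem_univ j), Finset.card_univ,
      nsmul_eq_mul]
  have suml_jk : ∀ j k : ι, j ≠ k →
      ∑ l, ∑ r, Φ (fun t => dd j t + dd k t + dd l t + dd r t)
      = (Q 3 * Q 1 + Q 2 * Q 2 + ((Fintype.card ι - 2 : ℕ) : ℝ) * (Q 2 * Q 1 * Q 1))
        + ((Q 2 * Q 2 + Q 1 * Q 3 + ((Fintype.card ι - 2 : ℕ) : ℝ) * (Q 1 * Q 2 * Q 1))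
          + ((Fintype.card ι - 2 : ℕ) : ℝ)
            * (3 * (Q 2 * Q 1 * Q 1)
              + ((Fintype.card ι - 3 : ℕ) : ℝ) * (Q 1 * Q 1 * Q 1 * Q 1))) := by
    intro j k hjk
    have hk1 : k ∈ Finset.univ.erase j := Finset.mem_erase.2 ⟨hjk.symm, Finset.mem_univ k⟩
    have hcard : ((Finset.univ.erase j).erase k).card = Fintype.card ι - 2 := by
      rw [Finset.card_erase_of_mem hk1, Finset.card_erase_of_mem (Finset.mem_univ j),
        Finset.card_univ]
      omega
    rw [← Finset.add_sum_erase Finset.univ _ (Finset.mem_univ j),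
      ← Finset.add_sum_erase _ _ hk1, h2jk1 j k hjk, h2jk2 j k hjk,
      Finset.sum_congr rfl (fun l hl => by
        have hlk : l ≠ k := Finset.ne_of_mem_erase hl
        have hlj : l ≠ j := Finset.ne_of_mem_erase (Finset.mem_of_mem_erase hl)
        exact sumr3 Φ Q hQ0 Mom hjk hlj.symm hlk.symm),
      Finset.sum_const, hcard, nsmul_eq_mul]
  have outer : ∀ j : ι, ∑ k, ∑ l, ∑ r, Φ (fun t => dd j t + dd k t + dd l t + dd r t)
      = ((Q 4 + ((Fintype.card ι - 1 : ℕ) : ℝ) * (Q 3 * Q 1))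
          + ((Fintype.card ι - 1 : ℕ) : ℝ)
            * (Q 3 * Q 1 + Q 2 * Q 2 + ((Fintype.card ι - 2 : ℕ) : ℝ) * (Q 2 * Q 1 * Q 1)))
        + ((Fintype.card ι - 1 : ℕ) : ℝ)
          * ((Q 3 * Q 1 + Q 2 * Q 2 + ((Fintype.card ι - 2 : ℕ) : ℝ) * (Q 2 * Q 1 * Q 1))
            + ((Q 2 * Q 2 + Q 1 * Q 3 + ((Fintype.card ι - 2 : ℕ) : ℝ) * (Q 1 * Q 2 * Q 1))
              + ((Fintype.card ι - 2 : ℕ) : ℝ)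
                * (3 * (Q 2 * Q 1 * Q 1)
                  + ((Fintype.card ι - 3 : ℕ) : ℝ) * (Q 1 * Q 1 * Q 1 * Q 1)))) := by
    intro j
    rw [← Finset.add_sum_erase Finset.univ _ (Finset.mem_univ j), suml_jj j,
      Finset.sum_congr rfl (fun k hk => suml_jk j k (Finset.ne_of_mem_erase hk).symm),
      Finset.sum_const, Finset.card_erase_of_mem (Finset.mem_univ j), Finset.card_univ,
      nsmul_eq_mul]
  rw [Finset.sum_congr rfl (fun j _ => outer j), Finset.sum_const, Finset.card_univ,
    nsmul_eq_mul]
  ring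

end Count

lemma cast_sub_one {K : ℕ} (h : 1 ≤ K) : ((K - 1 : ℕ) : ℝ) = (K : ℝ) - 1 := by
  rw [Nat.cast_sub h, Nat.cast_one]

lemma cast_mul2 {K : ℕ} (h : 1 ≤ K) :
    ((K - 1 : ℕ) : ℝ) * ((K - 2 : ℕ) : ℝ) = ((K : ℝ) - 1) * ((K : ℝ) - 2) := by
  match K, h with
  | 1, _ => norm_num
  | (k + 2), _ =>
    simp only [show k + 2 - 1 = k + 1 from rfl, show k + 2 - 2 = k from rfl]
    push_cast; ring

lemma cast_mul3 {K : ℕ} (h : 1 ≤ K) :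
    ((K - 1 : ℕ) : ℝ) * ((K - 2 : ℕ) : ℝ) * ((K - 3 : ℕ) : ℝ)
      = ((K : ℝ) - 1) * ((K : ℝ) - 2) * ((K : ℝ) - 3) := by
  match K, h with
  | 1, _ => norm_num
  | 2, _ => norm_num
  | (k + 3), _ =>
    simp only [show k + 3 - 1 = k + 2 from rfl, show k + 3 - 2 = k + 1 from rfl,
      show k + 3 - 3 = k from rfl]
    push_cast; ring



lemma expand2 {ι : Type*} [Fintype ι] [DecidableEq ι] (g : ι → ℝ) (a b : ℕ) :
    (∑ i, g i ^ a) * (∑ i, g i ^ b) = ∑ j, ∑ k, ∏ t, g t ^ (a * dd j t + b * dd k t) := by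
  rw [Finset.sum_mul_sum]
  exact Finset.sum_congr rfl fun j _ => Finset.sum_congr rfl fun k _ => by rw [prod_dd2]

lemma expand3 {ι : Type*} [Fintype ι] [DecidableEq ι] (g : ι → ℝ) :
    (∑ i, g i ^ 2) * (∑ i, g i ^ 1) * (∑ i, g i ^ 1)
      = ∑ j, ∑ k, ∑ l, ∏ t, g t ^ (2 * dd j t + dd k t + dd l t) := by
  rw [mul_assoc, Finset.sum_mul_sum, Finset.sum_mul]
  refine Finset.sum_congr rfl fun j _ => ?_
  rw [Finset.mul_sum]
  refine Finset.sum_congr rfl fun k _ => ?_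
  rw [Finset.mul_sum]
  refine Finset.sum_congr rfl fun l _ => ?_
  rw [prod_dd3]; ring

lemma expand4 {ι : Type*} [Fintype ι] [DecidableEq ι] (g : ι → ℝ) :
    (∑ i, g i ^ 1) * (∑ i, g i ^ 1) * (∑ i, g i ^ 1) * (∑ i, g i ^ 1)
      = ∑ j, ∑ k, ∑ l, ∑ r, ∏ t, g t ^ (dd j t + dd k t + dd l t + dd r t) := by
  have h4 : (∑ i, g i ^ 1) * (∑ i, g i ^ 1) * (∑ i, g i ^ 1) * (∑ i, g i ^ 1)
      = ((∑ i, g i ^ 1) * (∑ i, g i ^ 1)) * ((∑ i, g i ^ 1) * (∑ i, g i ^ 1)) := by ring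
  have hp : (∑ i, g i ^ 1) * (∑ i, g i ^ 1) = ∑ j, ∑ k, g j ^ 1 * g k ^ 1 :=
    Finset.sum_mul_sum _ _ _ _
  rw [h4, hp, Finset.sum_mul]
  refine Finset.sum_congr rfl fun j _ => ?_
  rw [Finset.sum_mul]
  refine Finset.sum_congr rfl fun k _ => ?_
  rw [Finset.mul_sum]
  refine Finset.sum_congr rfl fun l _ => ?_
  rw [Finset.mul_sum]
  refine Finset.sum_congr rfl fun r _ => ?_
  rw [prod_dd4]; ring

lemma sum_comm3 {α β γ M : Type*} [Fintype α] [Fintype β] [Fintype γ] [AddCommMonoid M]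
    (g : α → β → γ → M) :
    ∑ a, ∑ b, ∑ c, g a b c = ∑ b, ∑ c, ∑ a, g a b c := by
  rw [Finset.sum_comm]
  exact Finset.sum_congr rfl fun b _ => Finset.sum_comm

lemma sum_comm4 {α β γ δ M : Type*} [Fintype α] [Fintype β] [Fintype γ] [Fintype δ]
    [AddCommMonoid M] (g : α → β → γ → δ → M) :
    ∑ a, ∑ b, ∑ c, ∑ d, g a b c d = ∑ b, ∑ c, ∑ d, ∑ a, g a b c d := by
  rw [Finset.sum_comm]
  exact Finset.sum_congr rfl fun b _ => sum_comm3 _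

lemma sum_comm5 {α β γ δ ε M : Type*} [Fintype α] [Fintype β] [Fintype γ] [Fintype δ] [Fintype ε]
    [AddCommMonoid M] (g : α → β → γ → δ → ε → M) :
    ∑ a, ∑ b, ∑ c, ∑ d, ∑ e, g a b c d e = ∑ b, ∑ c, ∑ d, ∑ e, ∑ a, g a b c d e := by
  rw [Finset.sum_comm]
  exact Finset.sum_congr rfl fun b _ => sum_comm4 _

end BootAux

open MeasureTheory ProbabilityTheory

namespace BootAux

instance (n m : ℕ) [NeZero n] : IsProbabilityMeasure (unif n m) := by
  unfold unif; infer_instance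

section ULayer

variable (n m : ℕ) [NeZero n]

/-- normalized power sums -/
noncomputable def Qu (y : Fin n → ℝ) (k : ℕ) : ℝ := (∑ i, y i ^ k) / n

/-- normalized moment functional of the resampling layer -/
noncomputable def Phiu (y : Fin n → ℝ) (e : Fin m → ℕ) : ℝ :=
  (∑ u : Fin m → Fin n, ∏ j, y (u j) ^ e j) / (n : ℝ) ^ m

lemma Qu_zero (y : Fin n → ℝ) : Qu n y 0 = 1 := by
  simp [Qu, Finset.card_univ, (Nat.cast_ne_zero (R := ℝ)).2 (NeZero.ne n)]

lemma Phiu_eq (y : Fin n → ℝ) (e : Fin m → ℕ) :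
    Phiu n m y e = ∏ j, Qu n y (e j) := by
  unfold Phiu Qu
  rw [show (∑ u : Fin m → Fin n, ∏ j, y (u j) ^ e j)
      = ∏ j : Fin m, ∑ i : Fin n, y i ^ e j by
    rw [Finset.prod_univ_sum, Fintype.piFinset_univ]]
  rw [Finset.prod_div_distrib, Finset.prod_const, Finset.card_univ, Fintype.card_fin]

lemma Phiu_def (y : Fin n → ℝ) (e : Fin m → ℕ) :
    (∑ u : Fin m → Fin n, ∏ j, y (u j) ^ e j) / (n : ℝ) ^ m = Phiu n m y e := rfl

lemma integral_unif (f : (Fin m → Fin n) → ℝ) :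
    ∫ u, f u ∂(unif n m) = (∑ u, f u) / (n : ℝ) ^ m := by
  rw [unif, integral_fintype (Integrable.of_finite)]
  have h : ∀ u : Fin m → Fin n,
      (PMF.uniformOfFintype (Fin m → Fin n)).toMeasure.real {u} = ((n : ℝ) ^ m)⁻¹ := by
    intro u
    rw [measureReal_def, PMF.toMeasure_apply_singleton _ _ (measurableSet_singleton u),
      PMF.uniformOfFintype_apply, ENNReal.toReal_inv]
    norm_num [Fintype.card_fun]
  simp only [h, smul_eq_mul]
  rw [← Finset.mul_sum, mul_comm, ← div_eq_mul_inv]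

lemma memLp_unif (f : (Fin m → Fin n) → ℝ) (p : ENNReal) :
    MemLp f p (unif n m) := by
  obtain ⟨C, hC⟩ := Finite.exists_le (fun u => ‖f u‖)
  exact MemLp.of_bound (Measurable.aestronglyMeasurable (measurable_of_countable f)) C
    (Filter.Eventually.of_forall hC)

lemma varU (hm : 2 ≤ m) (y : Fin n → ℝ) :
    variance (fun u : Fin m → Fin n =>
        ((m : ℝ) - 1)⁻¹ * ∑ j, (y (u j) - (m : ℝ)⁻¹ * ∑ k, y (u k)) ^ 2) (unif n m)
      = (1 / (m : ℝ)) * Qu n y 4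
        + ((3 - (m : ℝ)) / ((m : ℝ) * ((m : ℝ) - 1))) * (Qu n y 2 * Qu n y 2)
        + (-4 / (m : ℝ)) * (Qu n y 3 * Qu n y 1)
        + ((8 * (m : ℝ) - 12) / ((m : ℝ) * ((m : ℝ) - 1)))
            * (Qu n y 2 * Qu n y 1 * Qu n y 1)
        + ((6 - 4 * (m : ℝ)) / ((m : ℝ) * ((m : ℝ) - 1)))
            * (Qu n y 1 * Qu n y 1 * Qu n y 1 * Qu n y 1) := by
  have hm2 : (2 : ℝ) ≤ (m : ℝ) := by exact_mod_cast hm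
  have hm0 : (m : ℝ) ≠ 0 := by linarith
  have hm1 : (m : ℝ) - 1 ≠ 0 := by linarith
  have hQ0 : Qu n y 0 = 1 := Qu_zero n y
  have Mom : ∀ e : Fin m → ℕ, (∑ t, e t) ≤ 4 → Phiu n m y e = ∏ t, Qu n y (e t) :=
    fun e _ => Phiu_eq n m y e
  -- the five basic normalized sums
  have hA' : ∑ j : Fin m, Phiu n m y (fun t => 2 * dd j t) = (m : ℝ) * Qu n y 2 := by
    rw [Finset.sum_congr rfl fun j _ => ph1 (Phiu n m y) (Qu n y) hQ0 Mom j 2 (by omega),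
      Finset.sum_const, Finset.card_univ, Fintype.card_fin, nsmul_eq_mul]
  have hApt : ∀ u : Fin m → Fin n, ∑ j, y (u j) ^ 2
      = ∑ j, ∏ t, y (u t) ^ (2 * dd j t) := fun u =>
    Finset.sum_congr rfl fun j _ => (prod_pow_dd (fun t => y (u t)) j 2).symm
  have hA : (∑ u : Fin m → Fin n, ∑ j, y (u j) ^ 2) / (n : ℝ) ^ m = (m : ℝ) * Qu n y 2 := by
    rw [show (∑ u : Fin m → Fin n, ∑ j, y (u j) ^ 2)
        = ∑ j : Fin m, ∑ u : Fin m → Fin n, ∏ t, y (u t) ^ (2 * dd j t) by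
      rw [Finset.sum_congr rfl fun u _ => hApt u]; exact Finset.sum_comm]
    simp only [Finset.sum_div, Phiu_def n m y]
    exact hA'
  have hB' : ∑ j : Fin m, ∑ k : Fin m, Phiu n m y (fun t => 1 * dd j t + 1 * dd k t)
      = (m : ℝ) * Qu n y 2 + (m : ℝ) * ((m - 1 : ℕ) : ℝ) * (Qu n y 1 * Qu n y 1) := by
    rw [count2 (Phiu n m y) (Qu n y) hQ0 Mom 1 1 (by omega), Fintype.card_fin]
  have hBpt : ∀ u : Fin m → Fin n, (∑ j, y (u j)) ^ 2
      = ∑ j, ∑ k, ∏ t, y (u t) ^ (1 * dd j t + 1 * dd k t) := by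
    intro u
    rw [sq, Finset.sum_mul_sum]
    exact Finset.sum_congr rfl fun j _ => Finset.sum_congr rfl fun k _ => by
      rw [prod_dd2]; simp
  have hB : (∑ u : Fin m → Fin n, (∑ j, y (u j)) ^ 2) / (n : ℝ) ^ m
      = (m : ℝ) * Qu n y 2 + (m : ℝ) * ((m - 1 : ℕ) : ℝ) * (Qu n y 1 * Qu n y 1) := by
    rw [show (∑ u : Fin m → Fin n, (∑ j, y (u j)) ^ 2)
        = ∑ j : Fin m, ∑ k : Fin m, ∑ u : Fin m → Fin n,
            ∏ t, y (u t) ^ (1 * dd j t + 1 * dd k t) by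
      rw [Finset.sum_congr rfl fun u _ => hBpt u]; exact sum_comm3 _]
    simp only [Finset.sum_div, Phiu_def n m y]
    exact hB'
  have hC' : ∑ j : Fin m, ∑ k : Fin m, Phiu n m y (fun t => 2 * dd j t + 2 * dd k t)
      = (m : ℝ) * Qu n y 4 + (m : ℝ) * ((m - 1 : ℕ) : ℝ) * (Qu n y 2 * Qu n y 2) := by
    rw [count2 (Phiu n m y) (Qu n y) hQ0 Mom 2 2 (by omega), Fintype.card_fin]
  have hCpt : ∀ u : Fin m → Fin n, (∑ j, y (u j) ^ 2) ^ 2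
      = ∑ j, ∑ k, ∏ t, y (u t) ^ (2 * dd j t + 2 * dd k t) := by
    intro u
    rw [sq, Finset.sum_mul_sum]
    exact Finset.sum_congr rfl fun j _ => Finset.sum_congr rfl fun k _ =>
      (prod_dd2 (fun t => y (u t)) j k 2 2).symm
  have hC : (∑ u : Fin m → Fin n, (∑ j, y (u j) ^ 2) ^ 2) / (n : ℝ) ^ m
      = (m : ℝ) * Qu n y 4 + (m : ℝ) * ((m - 1 : ℕ) : ℝ) * (Qu n y 2 * Qu n y 2) := by
    rw [show (∑ u : Fin m → Fin n, (∑ j, y (u j) ^ 2) ^ 2)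
        = ∑ j : Fin m, ∑ k : Fin m, ∑ u : Fin m → Fin n,
            ∏ t, y (u t) ^ (2 * dd j t + 2 * dd k t) by
      rw [Finset.sum_congr rfl fun u _ => hCpt u]; exact sum_comm3 _]
    simp only [Finset.sum_div, Phiu_def n m y]
    exact hC'
  have hD' : ∑ j : Fin m, ∑ k : Fin m, ∑ l : Fin m,
        Phiu n m y (fun t => 2 * dd j t + dd k t + dd l t)
      = (m : ℝ) * Qu n y 4
        + 2 * (m : ℝ) * ((m - 1 : ℕ) : ℝ) * (Qu n y 3 * Qu n y 1)
        + (m : ℝ) * ((m - 1 : ℕ) : ℝ) * (Qu n y 2 * Qu n y 2)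
        + (m : ℝ) * ((m - 1 : ℕ) : ℝ) * ((m - 2 : ℕ) : ℝ)
          * (Qu n y 2 * Qu n y 1 * Qu n y 1) := by
    rw [count3 (Phiu n m y) (Qu n y) hQ0 Mom, Fintype.card_fin]
  have hDpt : ∀ u : Fin m → Fin n, (∑ j, y (u j) ^ 2) * (∑ j, y (u j)) ^ 2
      = ∑ j, ∑ k, ∑ l, ∏ t, y (u t) ^ (2 * dd j t + dd k t + dd l t) := by
    intro u
    rw [sq, Finset.sum_mul_sum, Finset.sum_mul]
    refine Finset.sum_congr rfl fun j _ => ?_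
    rw [Finset.mul_sum]
    refine Finset.sum_congr rfl fun k _ => ?_
    rw [Finset.mul_sum]
    refine Finset.sum_congr rfl fun l _ => ?_
    rw [prod_dd3]; ring
  have hD : (∑ u : Fin m → Fin n, (∑ j, y (u j) ^ 2) * (∑ j, y (u j)) ^ 2) / (n : ℝ) ^ m
      = (m : ℝ) * Qu n y 4
        + 2 * (m : ℝ) * ((m - 1 : ℕ) : ℝ) * (Qu n y 3 * Qu n y 1)
        + (m : ℝ) * ((m - 1 : ℕ) : ℝ) * (Qu n y 2 * Qu n y 2)
        + (m : ℝ) * ((m - 1 : ℕ) : ℝ) * ((m - 2 : ℕ) : ℝ)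
          * (Qu n y 2 * Qu n y 1 * Qu n y 1) := by
    rw [show (∑ u : Fin m → Fin n, (∑ j, y (u j) ^ 2) * (∑ j, y (u j)) ^ 2)
        = ∑ j : Fin m, ∑ k : Fin m, ∑ l : Fin m, ∑ u : Fin m → Fin n,
            ∏ t, y (u t) ^ (2 * dd j t + dd k t + dd l t) by
      rw [Finset.sum_congr rfl fun u _ => hDpt u]; exact sum_comm4 _]
    simp only [Finset.sum_div, Phiu_def n m y]
    exact hD'
  have hE' : ∑ j : Fin m, ∑ k : Fin m, ∑ l : Fin m, ∑ r : Fin m,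
        Phiu n m y (fun t => dd j t + dd k t + dd l t + dd r t)
      = (m : ℝ) * Qu n y 4
        + 4 * (m : ℝ) * ((m - 1 : ℕ) : ℝ) * (Qu n y 3 * Qu n y 1)
        + 3 * (m : ℝ) * ((m - 1 : ℕ) : ℝ) * (Qu n y 2 * Qu n y 2)
        + 6 * (m : ℝ) * ((m - 1 : ℕ) : ℝ) * ((m - 2 : ℕ) : ℝ)
          * (Qu n y 2 * Qu n y 1 * Qu n y 1)
        + (m : ℝ) * ((m - 1 : ℕ) : ℝ) * ((m - 2 : ℕ) : ℝ) * ((m - 3 : ℕ) : ℝ)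
          * (Qu n y 1 * Qu n y 1 * Qu n y 1 * Qu n y 1) := by
    rw [count4 (Phiu n m y) (Qu n y) hQ0 Mom, Fintype.card_fin]
  have hEpt : ∀ u : Fin m → Fin n, (∑ j, y (u j)) ^ 4
      = ∑ j, ∑ k, ∑ l, ∑ r, ∏ t, y (u t) ^ (dd j t + dd k t + dd l t + dd r t) := by
    intro u
    have h4 : (∑ j, y (u j)) ^ 4
        = ((∑ j, y (u j)) * (∑ j, y (u j))) * ((∑ j, y (u j)) * (∑ j, y (u j))) := by
      ring
    have hp : (∑ j, y (u j)) * (∑ j, y (u j)) = ∑ j, ∑ k, y (u j) * y (u k) :=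
      Finset.sum_mul_sum _ _ _ _
    rw [h4, hp, Finset.sum_mul]
    refine Finset.sum_congr rfl fun j _ => ?_
    rw [Finset.sum_mul]
    refine Finset.sum_congr rfl fun k _ => ?_
    rw [Finset.mul_sum]
    refine Finset.sum_congr rfl fun l _ => ?_
    rw [Finset.mul_sum]
    refine Finset.sum_congr rfl fun r _ => ?_
    rw [prod_dd4]; ring
  have hE : (∑ u : Fin m → Fin n, (∑ j, y (u j)) ^ 4) / (n : ℝ) ^ m
      = (m : ℝ) * Qu n y 4
        + 4 * (m : ℝ) * ((m - 1 : ℕ) : ℝ) * (Qu n y 3 * Qu n y 1)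
        + 3 * (m : ℝ) * ((m - 1 : ℕ) : ℝ) * (Qu n y 2 * Qu n y 2)
        + 6 * (m : ℝ) * ((m - 1 : ℕ) : ℝ) * ((m - 2 : ℕ) : ℝ)
          * (Qu n y 2 * Qu n y 1 * Qu n y 1)
        + (m : ℝ) * ((m - 1 : ℕ) : ℝ) * ((m - 2 : ℕ) : ℝ) * ((m - 3 : ℕ) : ℝ)
          * (Qu n y 1 * Qu n y 1 * Qu n y 1 * Qu n y 1) := by
    rw [show (∑ u : Fin m → Fin n, (∑ j, y (u j)) ^ 4)
        = ∑ j : Fin m, ∑ k : Fin m, ∑ l : Fin m, ∑ r : Fin m, ∑ u : Fin m → Fin n,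
            ∏ t, y (u t) ^ (dd j t + dd k t + dd l t + dd r t) by
      rw [Finset.sum_congr rfl fun u _ => hEpt u]; exact sum_comm5 _]
    simp only [Finset.sum_div, Phiu_def n m y]
    exact hE'
  -- rewrite the random variable
  have hpt : (fun u : Fin m → Fin n =>
      ((m : ℝ) - 1)⁻¹ * ∑ j, (y (u j) - (m : ℝ)⁻¹ * ∑ k, y (u k)) ^ 2)
      = fun u => ((m : ℝ) - 1)⁻¹
          * ((∑ j, y (u j) ^ 2) - (m : ℝ)⁻¹ * (∑ j, y (u j)) ^ 2) := by
    funext u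
    congr 1
    have expand : ∀ j : Fin m, (y (u j) - (m : ℝ)⁻¹ * ∑ k, y (u k)) ^ 2
        = y (u j) ^ 2 - (2 * (m : ℝ)⁻¹ * ∑ k, y (u k)) * y (u j)
          + (m : ℝ)⁻¹ ^ 2 * (∑ k, y (u k)) ^ 2 := fun j => by ring
    rw [Finset.sum_congr rfl fun j _ => expand j, Finset.sum_add_distrib,
      Finset.sum_sub_distrib, ← Finset.mul_sum, Finset.sum_const, Finset.card_univ,
      Fintype.card_fin, nsmul_eq_mul]
    field_simp
    ring
  rw [hpt, variance_eq_sub (memLp_unif n m _ 2), integral_unif, integral_unif]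
  simp only [Pi.pow_apply]
  -- first moment
  have hS1 : (∑ u : Fin m → Fin n, ((m : ℝ) - 1)⁻¹
        * ((∑ j, y (u j) ^ 2) - (m : ℝ)⁻¹ * (∑ j, y (u j)) ^ 2)) / (n : ℝ) ^ m
      = ((m : ℝ) - 1)⁻¹ * (((m : ℝ) * Qu n y 2)
          - (m : ℝ)⁻¹ * ((m : ℝ) * Qu n y 2
            + (m : ℝ) * ((m - 1 : ℕ) : ℝ) * (Qu n y 1 * Qu n y 1))) := by
    rw [← Finset.mul_sum, Finset.sum_sub_distrib, ← Finset.mul_sum, mul_div_assoc, sub_div,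
      mul_div_assoc, hA, hB]
  -- second moment
  have hpt2 : ∀ u : Fin m → Fin n, (((m : ℝ) - 1)⁻¹
        * ((∑ j, y (u j) ^ 2) - (m : ℝ)⁻¹ * (∑ j, y (u j)) ^ 2)) ^ 2
      = ((m : ℝ) - 1)⁻¹ ^ 2 * (∑ j, y (u j) ^ 2) ^ 2
        - (((m : ℝ) - 1)⁻¹ ^ 2 * (2 * (m : ℝ)⁻¹))
          * ((∑ j, y (u j) ^ 2) * (∑ j, y (u j)) ^ 2)
        + (((m : ℝ) - 1)⁻¹ ^ 2 * (m : ℝ)⁻¹ ^ 2) * (∑ j, y (u j)) ^ 4 := fun u => by ring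
  have hS2 : (∑ u : Fin m → Fin n, (((m : ℝ) - 1)⁻¹
        * ((∑ j, y (u j) ^ 2) - (m : ℝ)⁻¹ * (∑ j, y (u j)) ^ 2)) ^ 2) / (n : ℝ) ^ m
      = ((m : ℝ) - 1)⁻¹ ^ 2
          * ((m : ℝ) * Qu n y 4 + (m : ℝ) * ((m - 1 : ℕ) : ℝ) * (Qu n y 2 * Qu n y 2))
        - (((m : ℝ) - 1)⁻¹ ^ 2 * (2 * (m : ℝ)⁻¹))
          * ((m : ℝ) * Qu n y 4
            + 2 * (m : ℝ) * ((m - 1 : ℕ) : ℝ) * (Qu n y 3 * Qu n y 1)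
            + (m : ℝ) * ((m - 1 : ℕ) : ℝ) * (Qu n y 2 * Qu n y 2)
            + (m : ℝ) * ((m - 1 : ℕ) : ℝ) * ((m - 2 : ℕ) : ℝ)
              * (Qu n y 2 * Qu n y 1 * Qu n y 1))
        + (((m : ℝ) - 1)⁻¹ ^ 2 * (m : ℝ)⁻¹ ^ 2)
          * ((m : ℝ) * Qu n y 4
            + 4 * (m : ℝ) * ((m - 1 : ℕ) : ℝ) * (Qu n y 3 * Qu n y 1)
            + 3 * (m : ℝ) * ((m - 1 : ℕ) : ℝ) * (Qu n y 2 * Qu n y 2)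
            + 6 * (m : ℝ) * ((m - 1 : ℕ) : ℝ) * ((m - 2 : ℕ) : ℝ)
              * (Qu n y 2 * Qu n y 1 * Qu n y 1)
            + (m : ℝ) * ((m - 1 : ℕ) : ℝ) * ((m - 2 : ℕ) : ℝ) * ((m - 3 : ℕ) : ℝ)
              * (Qu n y 1 * Qu n y 1 * Qu n y 1 * Qu n y 1)) := by
    rw [Finset.sum_congr rfl fun u _ => hpt2 u, Finset.sum_add_distrib,
      Finset.sum_sub_distrib, ← Finset.mul_sum, ← Finset.mul_sum, ← Finset.mul_sum,
      add_div, sub_div, mul_div_assoc, mul_div_assoc, mul_div_assoc, hC, hD, hE]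
  rw [hS2, hS1]
  -- final algebra
  have e1 : ((m - 1 : ℕ) : ℝ) = (m : ℝ) - 1 := by
    rw [Nat.cast_sub (by omega)]; norm_num
  have e2 : ((m - 2 : ℕ) : ℝ) = (m : ℝ) - 2 := by
    rw [Nat.cast_sub hm]; norm_num
  rcases Nat.lt_or_ge m 3 with h3 | h3
  · have hm2' : m = 2 := by omega
    subst hm2'
    norm_num
    ring
  · have e3 : ((m - 3 : ℕ) : ℝ) = (m : ℝ) - 3 := by
      rw [Nat.cast_sub h3]; norm_num
    rw [e1, e2, e3]
    field_simp
    ring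

end ULayer

end BootAux

namespace BootAux

/-- moments of the common distribution -/
noncomputable def Qnu (ν : Measure ℝ) (k : ℕ) : ℝ := ∫ x, x ^ k ∂ν

/-- moment functional of the sample -/
noncomputable def Phio {Ω : Type*} [MeasurableSpace Ω] (μ : Measure Ω) {n : ℕ}
    (X : Fin n → Ω → ℝ) (e : Fin n → ℕ) : ℝ := ∫ ω, ∏ i, X i ω ^ e i ∂μ

lemma Phio_def {Ω : Type*} [MeasurableSpace Ω] (μ : Measure Ω) {n : ℕ}
    (X : Fin n → Ω → ℝ) (e : Fin n → ℕ) :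
    ∫ ω, ∏ i, X i ω ^ e i ∂μ = Phio μ X e := rfl

section OLayer

variable {Ω : Type*} [MeasurableSpace Ω] (μ : Measure Ω) [IsProbabilityMeasure μ]

lemma integrable_pow4 (f : Ω → ℝ) (hfm : Measurable f) (hf : MemLp f 4 μ) (k : ℕ)
    (hk : k ≤ 4) : Integrable (fun ω => f ω ^ k) μ := by
  have h4 : Integrable (fun ω => ‖f ω‖ ^ ((4 : ENNReal)).toReal) μ :=
    hf.integrable_norm_rpow (by norm_num) (by norm_num)
  have h4' : Integrable (fun ω => |f ω| ^ (4 : ℕ)) μ := by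
    refine h4.congr (Filter.Eventually.of_forall fun ω => ?_)
    show ‖f ω‖ ^ ((4 : ENNReal)).toReal = |f ω| ^ (4 : ℕ)
    rw [Real.norm_eq_abs, show ((4 : ENNReal)).toReal = ((4 : ℕ) : ℝ) by norm_num,
      Real.rpow_natCast]
  refine Integrable.mono' (h4'.add (integrable_const 1))
    ((hfm.pow_const k).aestronglyMeasurable) (Filter.Eventually.of_forall fun ω => ?_)
  rw [norm_pow, Real.norm_eq_abs]
  rcases le_total (|f ω|) 1 with h | h
  · calc |f ω| ^ k ≤ 1 := pow_le_one₀ (abs_nonneg _) h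
      _ ≤ |f ω| ^ 4 + 1 := le_add_of_nonneg_left (by positivity)
  · calc |f ω| ^ k ≤ |f ω| ^ 4 := pow_le_pow_right₀ h hk
      _ ≤ |f ω| ^ 4 + 1 := le_add_of_nonneg_right zero_le_one

lemma prod_moment {n : ℕ} (X : Fin n → Ω → ℝ) (hXmeas : ∀ i, Measurable (X i))
    (hXindep : iIndepFun X μ) (hL4 : ∀ i, MemLp (X i) 4 μ)
    (e : Fin n → ℕ) (he : ∀ i, e i ≤ 4) (s : Finset (Fin n)) :
    Integrable (fun ω => ∏ i ∈ s, X i ω ^ e i) μ ∧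
      ∫ ω, ∏ i ∈ s, X i ω ^ e i ∂μ = ∏ i ∈ s, ∫ ω, X i ω ^ e i ∂μ := by
  classical
  induction s using Finset.cons_induction with
  | empty => simp
  | cons a s ha ih =>
    have hYm : ∀ i, Measurable (fun ω => X i ω ^ e i) := fun i => (hXmeas i).pow_const (e i)
    have hY : iIndepFun (fun i => fun ω => X i ω ^ e i) μ := by
      have h := hXindep.comp (fun i (x : ℝ) => x ^ e i)
        (fun i => measurable_id.pow_const (e i))
      exact h
    have hprodeq : (∏ j ∈ s, fun ω => X j ω ^ e j) = fun ω => ∏ j ∈ s, X j ω ^ e j := by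
      funext ω; simp
    have hindep : IndepFun (fun ω => ∏ j ∈ s, X j ω ^ e j) (fun ω => X a ω ^ e a) μ := by
      have h := hY.indepFun_finsetProd_of_notMem hYm ha
      rwa [hprodeq] at h
    have hIa : Integrable (fun ω => X a ω ^ e a) μ :=
      integrable_pow4 μ (X a) (hXmeas a) (hL4 a) (e a) (he a)
    have hInt : Integrable (fun ω => X a ω ^ e a * ∏ i ∈ s, X i ω ^ e i) μ :=
      hindep.symm.integrable_mul hIa ih.1
    constructor
    · simpa only [Finset.prod_cons] using hInt
    · simp only [Finset.prod_cons]
      rw [hindep.symm.integral_fun_mul_eq_mul_integral hIa.aestronglyMeasurable ih.1.aestronglyMeasurable, ih.2]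

lemma integral_add5 {Ω : Type*} [MeasurableSpace Ω] (μ : Measure Ω) (A B C D E : Ω → ℝ)
    (hA : Integrable A μ) (hB : Integrable B μ) (hC : Integrable C μ)
    (hD : Integrable D μ) (hE : Integrable E μ) :
    ∫ ω, (A ω + B ω + C ω + D ω + E ω) ∂μ
      = ∫ ω, A ω ∂μ + ∫ ω, B ω ∂μ + ∫ ω, C ω ∂μ + ∫ ω, D ω ∂μ + ∫ ω, E ω ∂μ := by
  rw [integral_add
      (show Integrable (fun ω => A ω + B ω + C ω + D ω) μ from ((hA.add hB).add hC).add hD) hE,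
    integral_add (show Integrable (fun ω => A ω + B ω + C ω) μ from (hA.add hB).add hC) hD,
    integral_add (show Integrable (fun ω => A ω + B ω) μ from hA.add hB) hC,
    integral_add hA hB]

end OLayer

end BootAux

set_option maxHeartbeats 2000000 in
open BootAux in
/-- Expected conditional variance of the bootstrap sample variance:
`E_L[Var_U(v̂(L_U))] = ((n−1)/(n·m·(m−1)))·[(3m − 3 + ((n²−2n+3)/n²)(6−4m))·μ₂²
  + (m − 1 + ((n−1)/n²)(6−4m))·μ₄]`. -/
theorem expected_conditional_variance_bootstrap_sample_variance
    {Ω : Type*} [MeasurableSpace Ω] (μ : Measure Ω) [IsProbabilityMeasure μ]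
    (n m : ℕ) [NeZero n] (hm : 2 ≤ m)
    (X : Fin n → Ω → ℝ) (hXmeas : ∀ i, Measurable (X i))
    (hXindep : iIndepFun X μ)
    (ν : Measure ℝ) (hXid : ∀ i, Measure.map (X i) μ = ν)
    (hL4 : ∀ i, MemLp (X i) 4 μ)
    (hcentered : ∫ ω, X ⟨0, Nat.pos_of_ne_zero (NeZero.ne n)⟩ ω ∂μ = 0)
    (μ₂ μ₄ : ℝ)
    (hμ₂ : μ₂ = ∫ ω, (X ⟨0, Nat.pos_of_ne_zero (NeZero.ne n)⟩ ω) ^ 2 ∂μ)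
    (hμ₄ : μ₄ = ∫ ω, (X ⟨0, Nat.pos_of_ne_zero (NeZero.ne n)⟩ ω) ^ 4 ∂μ) :
    ∫ ω, variance (fun u => vhatBoot n m X ω u) (unif n m) ∂μ
      = (((n : ℝ) - 1) / ((n : ℝ) * m * ((m : ℝ) - 1))) *
          ((3 * (m : ℝ) - 3
              + (((n : ℝ) ^ 2 - 2 * n + 3) / (n : ℝ) ^ 2) * (6 - 4 * (m : ℝ))) * μ₂ ^ 2
            + ((m : ℝ) - 1
              + (((n : ℝ) - 1) / (n : ℝ) ^ 2) * (6 - 4 * (m : ℝ))) * μ₄) := by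
  classical
  have hn1 : 1 ≤ n := Nat.pos_of_ne_zero (NeZero.ne n)
  have hn0 : (n : ℝ) ≠ 0 := Nat.cast_ne_zero.2 (NeZero.ne n)
  have hm2 : (2 : ℝ) ≤ (m : ℝ) := by exact_mod_cast hm
  have hm0 : (m : ℝ) ≠ 0 := by linarith
  have hm1 : (m : ℝ) - 1 ≠ 0 := by linarith
  have hmom : ∀ (i : Fin n) (k : ℕ), ∫ ω, X i ω ^ k ∂μ = Qnu ν k := by
    intro i k
    unfold Qnu
    rw [← hXid i]
    exact (integral_map (hXmeas i).aemeasurable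
      (measurable_id.pow_const k).aestronglyMeasurable).symm
  have hQ0 : Qnu ν 0 = 1 := by
    haveI : IsProbabilityMeasure ν := by
      rw [← hXid ⟨0, Nat.pos_of_ne_zero (NeZero.ne n)⟩]
      exact Measure.isProbabilityMeasure_map (hXmeas _).aemeasurable
    simp [Qnu]
  have hQ1 : Qnu ν 1 = 0 := by
    rw [← hmom ⟨0, Nat.pos_of_ne_zero (NeZero.ne n)⟩ 1]
    simpa using hcentered
  have hQ2 : Qnu ν 2 = μ₂ := by
    rw [← hmom ⟨0, Nat.pos_of_ne_zero (NeZero.ne n)⟩ 2]; exact hμ₂.symm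
  have hQ4 : Qnu ν 4 = μ₄ := by
    rw [← hmom ⟨0, Nat.pos_of_ne_zero (NeZero.ne n)⟩ 4]; exact hμ₄.symm
  have hIntMono : ∀ e : Fin n → ℕ, (∀ i, e i ≤ 4) →
      Integrable (fun ω => ∏ i, X i ω ^ e i) μ :=
    fun e he => (prod_moment μ X hXmeas hXindep hL4 e he Finset.univ).1
  have Momo : ∀ e : Fin n → ℕ, (∑ t, e t) ≤ 4 → Phio μ X e = ∏ t, Qnu ν (e t) := by
    intro e he
    have hee : ∀ i, e i ≤ 4 := fun i =>
      le_trans (Finset.single_le_sum (fun _ _ => Nat.zero_le _) (Finset.mem_univ i)) he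
    rw [← Phio_def μ X e, (prod_moment μ X hXmeas hXindep hL4 e hee Finset.univ).2]
    exact Finset.prod_congr rfl fun i _ => hmom i (e i)
  -- flat pointwise forms of the empirical moments
  have hpt4 : ∀ ω : Ω, Qu n (fun i => X i ω) 4
      = (∑ j : Fin n, ∏ t, X t ω ^ (4 * dd j t)) / (n : ℝ) := by
    intro ω
    simp only [Qu]
    congr 1
    exact Finset.sum_congr rfl fun j _ => (prod_pow_dd (fun t => X t ω) j 4).symm
  have hpt22 : ∀ ω : Ω, Qu n (fun i => X i ω) 2 * Qu n (fun i => X i ω) 2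
      = (∑ j : Fin n, ∑ k : Fin n, ∏ t, X t ω ^ (2 * dd j t + 2 * dd k t))
          / ((n : ℝ) * n) := by
    intro ω
    simp only [Qu]
    rw [div_mul_div_comm, expand2]
  have hpt31 : ∀ ω : Ω, Qu n (fun i => X i ω) 3 * Qu n (fun i => X i ω) 1
      = (∑ j : Fin n, ∑ k : Fin n, ∏ t, X t ω ^ (3 * dd j t + 1 * dd k t))
          / ((n : ℝ) * n) := by
    intro ω
    simp only [Qu]
    rw [div_mul_div_comm, expand2]
  have hpt211 : ∀ ω : Ω,
      Qu n (fun i => X i ω) 2 * Qu n (fun i => X i ω) 1 * Qu n (fun i => X i ω) 1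
      = (∑ j : Fin n, ∑ k : Fin n, ∑ l : Fin n,
            ∏ t, X t ω ^ (2 * dd j t + dd k t + dd l t)) / ((n : ℝ) * n * n) := by
    intro ω
    simp only [Qu]
    rw [div_mul_div_comm, div_mul_div_comm, expand3]
  have hpt1111 : ∀ ω : Ω,
      Qu n (fun i => X i ω) 1 * Qu n (fun i => X i ω) 1 * Qu n (fun i => X i ω) 1
          * Qu n (fun i => X i ω) 1
      = (∑ j : Fin n, ∑ k : Fin n, ∑ l : Fin n, ∑ r : Fin n,
            ∏ t, X t ω ^ (dd j t + dd k t + dd l t + dd r t))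
          / ((n : ℝ) * n * n * n) := by
    intro ω
    simp only [Qu]
    rw [div_mul_div_comm, div_mul_div_comm, div_mul_div_comm, expand4]
  -- the integrand, flattened
  have hvar : (fun ω => variance (fun u => vhatBoot n m X ω u) (unif n m))
      = fun ω =>
        (1 / (m : ℝ)) * ((∑ j : Fin n, ∏ t, X t ω ^ (4 * dd j t)) / (n : ℝ))
        + ((3 - (m : ℝ)) / ((m : ℝ) * ((m : ℝ) - 1)))
            * ((∑ j : Fin n, ∑ k : Fin n, ∏ t, X t ω ^ (2 * dd j t + 2 * dd k t))
                / ((n : ℝ) * n))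
        + (-4 / (m : ℝ))
            * ((∑ j : Fin n, ∑ k : Fin n, ∏ t, X t ω ^ (3 * dd j t + 1 * dd k t))
                / ((n : ℝ) * n))
        + ((8 * (m : ℝ) - 12) / ((m : ℝ) * ((m : ℝ) - 1)))
            * ((∑ j : Fin n, ∑ k : Fin n, ∑ l : Fin n,
                  ∏ t, X t ω ^ (2 * dd j t + dd k t + dd l t)) / ((n : ℝ) * n * n))
        + ((6 - 4 * (m : ℝ)) / ((m : ℝ) * ((m : ℝ) - 1)))
            * ((∑ j : Fin n, ∑ k : Fin n, ∑ l : Fin n, ∑ r : Fin n,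
                  ∏ t, X t ω ^ (dd j t + dd k t + dd l t + dd r t))
                / ((n : ℝ) * n * n * n)) := by
    funext ω
    have h := varU n m hm (fun i => X i ω)
    rw [hpt4 ω, hpt22 ω, hpt31 ω, hpt211 ω, hpt1111 ω] at h
    simpa only [vhatBoot] using h
  -- integrability of the flat pieces
  have hI4 : Integrable (fun ω => (∑ j : Fin n, ∏ t, X t ω ^ (4 * dd j t)) / (n : ℝ)) μ :=
    (integrable_finset_sum _ fun j _ => hIntMono _ (fun i => by simp only [dd]; split_ifs <;> omega)).div_const _
  have hI22 : Integrable (fun ω =>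
      (∑ j : Fin n, ∑ k : Fin n, ∏ t, X t ω ^ (2 * dd j t + 2 * dd k t))
        / ((n : ℝ) * n)) μ :=
    (integrable_finset_sum _ fun j _ => integrable_finset_sum _ fun k _ =>
      hIntMono _ (fun i => by simp only [dd]; split_ifs <;> omega)).div_const _
  have hI31 : Integrable (fun ω =>
      (∑ j : Fin n, ∑ k : Fin n, ∏ t, X t ω ^ (3 * dd j t + 1 * dd k t))
        / ((n : ℝ) * n)) μ :=
    (integrable_finset_sum _ fun j _ => integrable_finset_sum _ fun k _ =>
      hIntMono _ (fun i => by simp only [dd]; split_ifs <;> omega)).div_const _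
  have hI211 : Integrable (fun ω =>
      (∑ j : Fin n, ∑ k : Fin n, ∑ l : Fin n,
          ∏ t, X t ω ^ (2 * dd j t + dd k t + dd l t)) / ((n : ℝ) * n * n)) μ :=
    (integrable_finset_sum _ fun j _ => integrable_finset_sum _ fun k _ =>
      integrable_finset_sum _ fun l _ => hIntMono _ (fun i => by simp only [dd]; split_ifs <;> omega)).div_const _
  have hI1111 : Integrable (fun ω =>
      (∑ j : Fin n, ∑ k : Fin n, ∑ l : Fin n, ∑ r : Fin n,
          ∏ t, X t ω ^ (dd j t + dd k t + dd l t + dd r t))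
        / ((n : ℝ) * n * n * n)) μ :=
    (integrable_finset_sum _ fun j _ => integrable_finset_sum _ fun k _ =>
      integrable_finset_sum _ fun l _ => integrable_finset_sum _ fun r _ =>
        hIntMono _ (fun i => by simp only [dd]; split_ifs <;> omega)).div_const _
  -- values of the integrals
  have hval4 : ∫ ω, (∑ j : Fin n, ∏ t, X t ω ^ (4 * dd j t)) / (n : ℝ) ∂μ
      = ((n : ℝ) * Qnu ν 4) / (n : ℝ) := by
    rw [integral_div]
    congr 1
    rw [integral_finset_sum _ fun j _ => hIntMono _ (fun i => by simp only [dd]; split_ifs <;> omega)]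
    simp only [Phio_def μ X]
    rw [Finset.sum_congr rfl fun j _ => ph1 (Phio μ X) (Qnu ν) hQ0 Momo j 4 (by omega),
      Finset.sum_const, Finset.card_univ, Fintype.card_fin, nsmul_eq_mul]
  have hval22 : ∫ ω, (∑ j : Fin n, ∑ k : Fin n,
        ∏ t, X t ω ^ (2 * dd j t + 2 * dd k t)) / ((n : ℝ) * n) ∂μ
      = ((n : ℝ) * Qnu ν 4 + (n : ℝ) * ((n - 1 : ℕ) : ℝ) * (Qnu ν 2 * Qnu ν 2))
          / ((n : ℝ) * n) := by
    rw [integral_div]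
    congr 1
    rw [integral_finset_sum _ fun j _ => integrable_finset_sum _ fun k _ => hIntMono _ (fun i => by simp only [dd]; split_ifs <;> omega),
      Finset.sum_congr rfl fun j _ => integral_finset_sum _ fun k _ => hIntMono _ (fun i => by simp only [dd]; split_ifs <;> omega)]
    simp only [Phio_def μ X]
    rw [count2 (Phio μ X) (Qnu ν) hQ0 Momo 2 2 (by omega), Fintype.card_fin]
  have hval31 : ∫ ω, (∑ j : Fin n, ∑ k : Fin n,
        ∏ t, X t ω ^ (3 * dd j t + 1 * dd k t)) / ((n : ℝ) * n) ∂μ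
      = ((n : ℝ) * Qnu ν 4 + (n : ℝ) * ((n - 1 : ℕ) : ℝ) * (Qnu ν 3 * Qnu ν 1))
          / ((n : ℝ) * n) := by
    rw [integral_div]
    congr 1
    rw [integral_finset_sum _ fun j _ => integrable_finset_sum _ fun k _ => hIntMono _ (fun i => by simp only [dd]; split_ifs <;> omega),
      Finset.sum_congr rfl fun j _ => integral_finset_sum _ fun k _ => hIntMono _ (fun i => by simp only [dd]; split_ifs <;> omega)]
    simp only [Phio_def μ X]
    rw [count2 (Phio μ X) (Qnu ν) hQ0 Momo 3 1 (by omega), Fintype.card_fin]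
  have hval211 : ∫ ω, (∑ j : Fin n, ∑ k : Fin n, ∑ l : Fin n,
        ∏ t, X t ω ^ (2 * dd j t + dd k t + dd l t)) / ((n : ℝ) * n * n) ∂μ
      = ((n : ℝ) * Qnu ν 4
          + 2 * (n : ℝ) * ((n - 1 : ℕ) : ℝ) * (Qnu ν 3 * Qnu ν 1)
          + (n : ℝ) * ((n - 1 : ℕ) : ℝ) * (Qnu ν 2 * Qnu ν 2)
          + (n : ℝ) * ((n - 1 : ℕ) : ℝ) * ((n - 2 : ℕ) : ℝ)
            * (Qnu ν 2 * Qnu ν 1 * Qnu ν 1)) / ((n : ℝ) * n * n) := by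
    rw [integral_div]
    congr 1
    rw [integral_finset_sum _ fun j _ => integrable_finset_sum _ fun k _ =>
        integrable_finset_sum _ fun l _ => hIntMono _ (fun i => by simp only [dd]; split_ifs <;> omega),
      Finset.sum_congr rfl fun j _ => integral_finset_sum _ fun k _ =>
        integrable_finset_sum _ fun l _ => hIntMono _ (fun i => by simp only [dd]; split_ifs <;> omega),
      Finset.sum_congr rfl fun j _ => Finset.sum_congr rfl fun k _ =>
        integral_finset_sum _ fun l _ => hIntMono _ (fun i => by simp only [dd]; split_ifs <;> omega)]
    simp only [Phio_def μ X]
    rw [count3 (Phio μ X) (Qnu ν) hQ0 Momo, Fintype.card_fin]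
  have hval1111 : ∫ ω, (∑ j : Fin n, ∑ k : Fin n, ∑ l : Fin n, ∑ r : Fin n,
        ∏ t, X t ω ^ (dd j t + dd k t + dd l t + dd r t)) / ((n : ℝ) * n * n * n) ∂μ
      = ((n : ℝ) * Qnu ν 4
          + 4 * (n : ℝ) * ((n - 1 : ℕ) : ℝ) * (Qnu ν 3 * Qnu ν 1)
          + 3 * (n : ℝ) * ((n - 1 : ℕ) : ℝ) * (Qnu ν 2 * Qnu ν 2)
          + 6 * (n : ℝ) * ((n - 1 : ℕ) : ℝ) * ((n - 2 : ℕ) : ℝ)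
            * (Qnu ν 2 * Qnu ν 1 * Qnu ν 1)
          + (n : ℝ) * ((n - 1 : ℕ) : ℝ) * ((n - 2 : ℕ) : ℝ) * ((n - 3 : ℕ) : ℝ)
            * (Qnu ν 1 * Qnu ν 1 * Qnu ν 1 * Qnu ν 1)) / ((n : ℝ) * n * n * n) := by
    rw [integral_div]
    congr 1
    rw [integral_finset_sum _ fun j _ => integrable_finset_sum _ fun k _ =>
        integrable_finset_sum _ fun l _ => integrable_finset_sum _ fun r _ =>
          hIntMono _ (fun i => by simp only [dd]; split_ifs <;> omega),
      Finset.sum_congr rfl fun j _ => integral_finset_sum _ fun k _ =>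
        integrable_finset_sum _ fun l _ => integrable_finset_sum _ fun r _ =>
          hIntMono _ (fun i => by simp only [dd]; split_ifs <;> omega),
      Finset.sum_congr rfl fun j _ => Finset.sum_congr rfl fun k _ =>
        integral_finset_sum _ fun l _ => integrable_finset_sum _ fun r _ =>
          hIntMono _ (fun i => by simp only [dd]; split_ifs <;> omega),
      Finset.sum_congr rfl fun j _ => Finset.sum_congr rfl fun k _ =>
        Finset.sum_congr rfl fun l _ => integral_finset_sum _ fun r _ => hIntMono _ (fun i => by simp only [dd]; split_ifs <;> omega)]
    simp only [Phio_def μ X]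
    rw [count4 (Phio μ X) (Qnu ν) hQ0 Momo, Fintype.card_fin]
  -- put everything together
  rw [hvar]
  rw [integral_add5 μ _ _ _ _ _ (hI4.const_mul _) (hI22.const_mul _) (hI31.const_mul _)
      (hI211.const_mul _) (hI1111.const_mul _),
    integral_const_mul, integral_const_mul, integral_const_mul, integral_const_mul,
    integral_const_mul,
    hval4, hval22, hval31, hval211, hval1111, hQ1, hQ2, hQ4]
  have e1 : ((n - 1 : ℕ) : ℝ) = (n : ℝ) - 1 := by
    rw [Nat.cast_sub hn1]; norm_num
  rcases Nat.lt_or_ge n 3 with h3 | h3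
  · interval_cases n <;> (norm_num; field_simp; ring)
  · have e2 : ((n - 2 : ℕ) : ℝ) = (n : ℝ) - 2 := by
      rw [Nat.cast_sub (by omega)]; norm_num
    have e3 : ((n - 3 : ℕ) : ℝ) = (n : ℝ) - 3 := by
      rw [Nat.cast_sub h3]; norm_num
    rw [e1, e2, e3]
    field_simp
    ring
end

section
/- With m = cn for fixed c > 0 (or more generally n, m, N → ∞ appropriately), the difference of MSEs satisfies MSE(ṽ(L,B)) − MSE(v̂(L)) = (1/(Nm))(μ₄ − μ₂²) + (1/n²)(−2μ₄ + 3μ₂²) + o(1/(Nm) + 1/n²). -/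
open MeasureTheory Filter

/-- Explicit closed form of `E_L[Var_U(v̂(L_U))]` for bootstrap samples of size `m`
from a centered sample of size `n` with moments `μ₂, μ₄`. -/
noncomputable def expCondVar (μ₂ μ₄ : ℝ) (n m : ℕ) : ℝ :=
  (((n : ℝ) - 1) / ((n : ℝ) * m * ((m : ℝ) - 1))) *
    ((3 * (m : ℝ) - 3
        + (((n : ℝ) ^ 2 - 2 * n + 3) / (n : ℝ) ^ 2) * (6 - 4 * (m : ℝ))) * μ₂ ^ 2
      + ((m : ℝ) - 1
        + (((n : ℝ) - 1) / (n : ℝ) ^ 2) * (6 - 4 * (m : ℝ))) * μ₄)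

/-- Explicit closed form of `Var_L(E_U[v̂(L_U)])`. -/
noncomputable def varCondMean (μ₂ μ₄ : ℝ) (n : ℕ) : ℝ :=
  ((3 - (n : ℝ)) * ((n : ℝ) - 1) / (n : ℝ) ^ 3) * μ₂ ^ 2
    + (((n : ℝ) - 1) ^ 2 / (n : ℝ) ^ 3) * μ₄

/-- Explicit MSE of the bagged sample variance estimator with `N` bootstrap
samples of size `m`. -/
noncomputable def mseBagged (μ₂ μ₄ : ℝ) (n m N : ℕ) : ℝ :=
  (N : ℝ)⁻¹ * expCondVar μ₂ μ₄ n m + varCondMean μ₂ μ₄ n + μ₂ ^ 2 / (n : ℝ) ^ 2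

/-- Explicit MSE of the plain unbiased sample variance estimator. -/
noncomputable def msePlain (μ₂ μ₄ : ℝ) (n : ℕ) : ℝ :=
  ((3 - (n : ℝ)) / ((n : ℝ) * ((n : ℝ) - 1))) * μ₂ ^ 2 + μ₄ / n

set_option maxHeartbeats 1000000 in
/-- Key algebraic bound, stated for real variables. -/
lemma real_bound (μ₂ μ₄ x y z : ℝ) (hx : 2 ≤ x) (hy : 2 ≤ y) (hz : 1 ≤ z) :
    |z⁻¹ * ((x - 1) / (x * y * (y - 1)) *
        ((3 * y - 3 + (x ^ 2 - 2 * x + 3) / x ^ 2 * (6 - 4 * y)) * μ₂ ^ 2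
          + (y - 1 + (x - 1) / x ^ 2 * (6 - 4 * y)) * μ₄))
      + ((3 - x) * (x - 1) / x ^ 3 * μ₂ ^ 2 + (x - 1) ^ 2 / x ^ 3 * μ₄) + μ₂ ^ 2 / x ^ 2
      - ((3 - x) / (x * (x - 1)) * μ₂ ^ 2 + μ₄ / x)
      - ((μ₄ - μ₂ ^ 2) / (z * y) + (-2 * μ₄ + 3 * μ₂ ^ 2) / x ^ 2)|
    ≤ ((z * y)⁻¹ + (x ^ 2)⁻¹)
        * (μ₂ ^ 2 * (2 / (y - 1) + 208 / x + 8 / (x - 1)) + |μ₄| * (6 / x)) := by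
  have hx0 : (0:ℝ) < x := by linarith
  have hx1 : (0:ℝ) < x - 1 := by linarith
  have hy0 : (0:ℝ) < y := by linarith
  have hy1 : (0:ℝ) < y - 1 := by linarith
  have hz0 : (0:ℝ) < z := by linarith
  have hd1 : (0:ℝ) < z*x^3*y*(y-1) := by
    have : (0:ℝ) < z*x^3*y := by positivity
    exact mul_pos this hy1
  have hd2 : (0:ℝ) < x^3*(x-1) := mul_pos (by positivity) hx1
  have hkey :
      z⁻¹ * ((x - 1) / (x * y * (y - 1)) *
        ((3 * y - 3 + (x ^ 2 - 2 * x + 3) / x ^ 2 * (6 - 4 * y)) * μ₂ ^ 2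
          + (y - 1 + (x - 1) / x ^ 2 * (6 - 4 * y)) * μ₄))
      + ((3 - x) * (x - 1) / x ^ 3 * μ₂ ^ 2 + (x - 1) ^ 2 / x ^ 3 * μ₄) + μ₂ ^ 2 / x ^ 2
      - ((3 - x) / (x * (x - 1)) * μ₂ ^ 2 + μ₄ / x)
      - ((μ₄ - μ₂ ^ 2) / (z * y) + (-2 * μ₄ + 3 * μ₂ ^ 2) / x ^ 2)
      = ((2*x^3 + 9*y*x^2 - 15*x^2 - 20*x*y + 30*x + 12*y - 18) / (z*x^3*y*(y-1))
          + (3 - 5*x) / (x^3*(x-1))) * μ₂ ^ 2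
        + (-(1/(z*x*y)) + (x-1)^2*(6-4*y) / (z*x^3*y*(y-1)) + 1/x^3) * μ₄ := by
    field_simp
    ring
  rw [hkey]
  set c2 : ℝ := (2*x^3 + 9*y*x^2 - 15*x^2 - 20*x*y + 30*x + 12*y - 18) / (z*x^3*y*(y-1))
      + (3 - 5*x) / (x^3*(x-1)) with hc2def
  set c4 : ℝ := -(1/(z*x*y)) + (x-1)^2*(6-4*y) / (z*x^3*y*(y-1)) + 1/x^3 with hc4def
  have habs : |c2 * μ₂ ^ 2 + c4 * μ₄| ≤ |c2| * μ₂ ^ 2 + |c4| * |μ₄| := by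
    calc |c2 * μ₂ ^ 2 + c4 * μ₄| ≤ |c2 * μ₂ ^ 2| + |c4 * μ₄| := abs_add_le _ _
      _ = |c2| * μ₂ ^ 2 + |c4| * |μ₄| := by
          rw [abs_mul, abs_mul, abs_of_nonneg (sq_nonneg μ₂)]
  have hc2b : |c2| ≤ ((z*y)⁻¹ + (x^2)⁻¹) * (2/(y-1) + 208/x + 8/(x-1)) := by
    have hQb : |2*x^3 + 9*y*x^2 - 15*x^2 - 20*x*y + 30*x + 12*y - 18|
        ≤ 2*x^3 + 104*y*x^2 := by
      have hyx : (4:ℝ) ≤ y*x := by nlinarith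
      have hA : 4*x ≤ y*x^2 := by nlinarith [mul_le_mul_of_nonneg_right hyx hx0.le]
      have hB : 4*y ≤ y*x^2 := by nlinarith [mul_le_mul_of_nonneg_left (mul_self_le_mul_self (by norm_num : (0:ℝ) ≤ 2) hx) hy0.le]
      have hC : (8:ℝ) ≤ y*x^2 := by nlinarith [mul_le_mul_of_nonneg_right hyx hx0.le]
      have hD : x*y*2 ≤ y*x^2 := by nlinarith [mul_le_mul_of_nonneg_left hx (mul_nonneg hy0.le hx0.le)]
      have hE : x^2*2 ≤ y*x^2 := by nlinarith [mul_le_mul_of_nonneg_right hy (sq_nonneg x)]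
      have hxy : (0:ℝ) ≤ x*y := by positivity
      have hx2 : (0:ℝ) ≤ x^2 := sq_nonneg x
      have hx3 : (0:ℝ) ≤ x^3 := by positivity
      rw [abs_le]
      constructor
      · linarith
      · linarith
    have h1 : |(2*x^3 + 9*y*x^2 - 15*x^2 - 20*x*y + 30*x + 12*y - 18) / (z*x^3*y*(y-1))|
        ≤ (2*x^3 + 104*y*x^2) / (z*x^3*y*(y-1)) := by
      rw [abs_div, abs_of_pos hd1]
      exact (div_le_div_iff_of_pos_right hd1).mpr hQb
    have h2 : |(3 - 5*x) / (x^3*(x-1))| = (5*x - 3) / (x^3*(x-1)) := by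
      rw [abs_div, abs_of_pos hd2, abs_of_nonpos (by linarith)]
      ring_nf
    have h3 : |c2| ≤ (2*x^3 + 104*y*x^2) / (z*x^3*y*(y-1)) + (5*x - 3) / (x^3*(x-1)) := by
      rw [hc2def]
      refine (abs_add_le _ _).trans ?_
      exact add_le_add h1 (le_of_eq h2)
    have hN2 : ((z*y)⁻¹ + (x^2)⁻¹) * (2/(y-1) + 208/x + 8/(x-1))
        - ((2*x^3 + 104*y*x^2) / (z*x^3*y*(y-1)) + (5*x - 3) / (x^3*(x-1)))
        = (y*z*(y-1)*(211*x - 205) + 2*(x*y*z*(x-1)) + x^2*(112*x - 104)*(y-2) + 8*x^3)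
            / (z*x^3*y*(y-1)*(x-1)) := by
      field_simp
      ring
    have hnum : 0 ≤ y*z*(y-1)*(211*x - 205) + 2*(x*y*z*(x-1)) + x^2*(112*x - 104)*(y-2)
        + 8*x^3 := by
      have a1 : 0 ≤ y*z*(y-1)*(211*x - 205) :=
        mul_nonneg (mul_nonneg (mul_nonneg hy0.le hz0.le) hy1.le) (by linarith)
      have a2 : 0 ≤ x*y*z*(x-1) := mul_nonneg (by positivity) hx1.le
      have a3 : 0 ≤ x^2*(112*x - 104)*(y-2) :=
        mul_nonneg (mul_nonneg (by positivity) (by linarith)) (by linarith)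
      have a4 : 0 ≤ 8*x^3 := by positivity
      linarith
    have hfrac : 0 ≤ (y*z*(y-1)*(211*x - 205) + 2*(x*y*z*(x-1))
        + x^2*(112*x - 104)*(y-2) + 8*x^3) / (z*x^3*y*(y-1)*(x-1)) :=
      div_nonneg hnum (mul_pos hd1 hx1).le
    linarith
  have hc4b : |c4| ≤ ((z*y)⁻¹ + (x^2)⁻¹) * (6/x) := by
    have h1 : |(-(1/(z*x*y)))| = 1/(z*x*y) := by
      rw [abs_neg, abs_of_pos (by positivity)]
    have h2 : |(x-1)^2*(6-4*y) / (z*x^3*y*(y-1))|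
        = (x-1)^2*(4*y-6) / (z*x^3*y*(y-1)) := by
      rw [abs_div, abs_of_pos hd1, abs_mul,
        abs_of_nonneg (sq_nonneg (x-1)), abs_of_nonpos (by linarith : (6:ℝ) - 4*y ≤ 0)]
      ring_nf
    have h3 : |(1/x^3 : ℝ)| = 1/x^3 := abs_of_pos (by positivity)
    have h4 : |c4| ≤ 1/(z*x*y) + (x-1)^2*(4*y-6) / (z*x^3*y*(y-1)) + 1/x^3 := by
      rw [hc4def]
      calc |(-(1/(z*x*y)) + (x-1)^2*(6-4*y) / (z*x^3*y*(y-1))) + 1/x^3|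
          ≤ |(-(1/(z*x*y)) + (x-1)^2*(6-4*y) / (z*x^3*y*(y-1)))| + |(1/x^3 : ℝ)| :=
            abs_add_le _ _
        _ ≤ (|(-(1/(z*x*y)))| + |(x-1)^2*(6-4*y) / (z*x^3*y*(y-1))|) + |(1/x^3 : ℝ)| :=
            add_le_add_left (abs_add_le _ _) _
        _ = 1/(z*x*y) + (x-1)^2*(4*y-6) / (z*x^3*y*(y-1)) + 1/x^3 := by
            rw [h1, h2, h3]
    have hN4 : ((z*y)⁻¹ + (x^2)⁻¹) * (6/x)
        - (1/(z*x*y) + (x-1)^2*(4*y-6) / (z*x^3*y*(y-1)) + 1/x^3)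
        = (5*(z*y*(y-1)) + x^2*(y+1) + 8*x*y - 4*y - 12*x + 6) / (z*x^3*y*(y-1)) := by
      field_simp
      ring
    have hnum : 0 ≤ 5*(z*y*(y-1)) + x^2*(y+1) + 8*x*y - 4*y - 12*x + 6 := by
      nlinarith [mul_nonneg (mul_nonneg hz0.le hy0.le) hy1.le,
        mul_nonneg (by linarith : (0:ℝ) ≤ x - 2) hy0.le,
        mul_nonneg (by linarith : (0:ℝ) ≤ y - 2) hx0.le,
        mul_nonneg (mul_nonneg (by linarith : (0:ℝ) ≤ x - 2) hx0.le) hy0.le,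
        mul_pos hx0 hy0]
    have hfrac : 0 ≤ (5*(z*y*(y-1)) + x^2*(y+1) + 8*x*y - 4*y - 12*x + 6)
        / (z*x^3*y*(y-1)) := div_nonneg hnum hd1.le
    linarith
  calc |c2 * μ₂ ^ 2 + c4 * μ₄| ≤ |c2| * μ₂ ^ 2 + |c4| * |μ₄| := habs
    _ ≤ (((z*y)⁻¹ + (x^2)⁻¹) * (2/(y-1) + 208/x + 8/(x-1))) * μ₂ ^ 2
        + (((z*y)⁻¹ + (x^2)⁻¹) * (6/x)) * |μ₄| :=
        add_le_add (mul_le_mul_of_nonneg_right hc2b (sq_nonneg _))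
          (mul_le_mul_of_nonneg_right hc4b (abs_nonneg _))
    _ = ((z * y)⁻¹ + (x ^ 2)⁻¹)
        * (μ₂ ^ 2 * (2 / (y - 1) + 208 / x + 8 / (x - 1)) + |μ₄| * (6 / x)) := by ring

/-- Nat-level version of the key bound. -/
lemma nat_bound (μ₂ μ₄ : ℝ) (n m N : ℕ) (hn : 2 ≤ n) (hm : 2 ≤ m) (hN : 1 ≤ N) :
    |mseBagged μ₂ μ₄ n m N - msePlain μ₂ μ₄ n
        - ((μ₄ - μ₂ ^ 2) / ((N : ℝ) * (m : ℝ)) + (-2 * μ₄ + 3 * μ₂ ^ 2) / (n : ℝ) ^ 2)|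
    ≤ (((N : ℝ) * (m : ℝ))⁻¹ + ((n : ℝ) ^ 2)⁻¹)
        * (μ₂ ^ 2 * (2 / ((m : ℝ) - 1) + 208 / (n : ℝ) + 8 / ((n : ℝ) - 1))
          + |μ₄| * (6 / (n : ℝ))) := by
  have hx : (2:ℝ) ≤ (n : ℝ) := by exact_mod_cast hn
  have hy : (2:ℝ) ≤ (m : ℝ) := by exact_mod_cast hm
  have hz : (1:ℝ) ≤ (N : ℝ) := by exact_mod_cast hN
  simpa [mseBagged, expCondVar, varCondMean, msePlain] using
    real_bound μ₂ μ₄ (n : ℝ) (m : ℝ) (N : ℝ) hx hy hz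

/-- Asymptotic expansion of the MSE difference:
`MSE(ṽ) − MSE(v̂) = (μ₄ − μ₂²)/(Nm) + (−2μ₄ + 3μ₂²)/n² + o(1/(Nm) + 1/n²)`
as `n → ∞` with `m = m(n) → ∞` and any iteration numbers `N(n) ≥ 1`. -/

theorem mse_difference_asymptotics
    (ν : Measure ℝ) [IsProbabilityMeasure ν]
    (hmom : MemLp (fun x : ℝ => x) 4 ν)
    (hcentered : ∫ x, x ∂ν = 0)
    (μ₂ μ₄ : ℝ) (hμ₂ : μ₂ = ∫ x, x ^ 2 ∂ν) (hμ₄ : μ₄ = ∫ x, x ^ 4 ∂ν)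
    (m N : ℕ → ℕ) (hm : ∀ k, 2 ≤ m k) (hN : ∀ k, 1 ≤ N k)
    (hmtop : Tendsto m atTop atTop) :
    Tendsto
      (fun n : ℕ =>
        (mseBagged μ₂ μ₄ n (m n) (N n) - msePlain μ₂ μ₄ n
            - ((μ₄ - μ₂ ^ 2) / ((N n : ℝ) * (m n : ℝ))
              + (-2 * μ₄ + 3 * μ₂ ^ 2) / (n : ℝ) ^ 2))
          / (((N n : ℝ) * (m n : ℝ))⁻¹ + ((n : ℝ) ^ 2)⁻¹))
      atTop (nhds 0) := by
  set B : ℕ → ℝ := fun n =>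
    μ₂ ^ 2 * (2 / ((m n : ℝ) - 1) + 208 / (n : ℝ) + 8 / ((n : ℝ) - 1))
      + |μ₄| * (6 / (n : ℝ)) with hBdef
  have hncast : Tendsto (fun n : ℕ => (n : ℝ)) atTop atTop :=
    tendsto_natCast_atTop_atTop
  have hmcast : Tendsto (fun n : ℕ => (m n : ℝ)) atTop atTop :=
    tendsto_natCast_atTop_atTop.comp hmtop
  have t1 : Tendsto (fun n : ℕ => 2 / ((m n : ℝ) - 1)) atTop (nhds 0) :=
    Tendsto.div_atTop tendsto_const_nhds (tendsto_atTop_add_const_right _ (-1) hmcast)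
  have t2 : Tendsto (fun n : ℕ => 208 / (n : ℝ)) atTop (nhds 0) :=
    Tendsto.div_atTop tendsto_const_nhds hncast
  have t3 : Tendsto (fun n : ℕ => 8 / ((n : ℝ) - 1)) atTop (nhds 0) :=
    Tendsto.div_atTop tendsto_const_nhds (tendsto_atTop_add_const_right _ (-1) hncast)
  have t4 : Tendsto (fun n : ℕ => 6 / (n : ℝ)) atTop (nhds 0) :=
    Tendsto.div_atTop tendsto_const_nhds hncast
  have hB : Tendsto B atTop (nhds 0) := by
    have := (((t1.add t2).add t3).const_mul (μ₂ ^ 2)).add (t4.const_mul |μ₄|)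
    simpa [hBdef] using this
  apply squeeze_zero_norm' _ hB
  filter_upwards [eventually_ge_atTop 2] with n hn2
  have hz : (1:ℝ) ≤ (N n : ℝ) := by exact_mod_cast hN n
  have hy : (2:ℝ) ≤ (m n : ℝ) := by exact_mod_cast hm n
  have hx : (2:ℝ) ≤ (n : ℝ) := by exact_mod_cast hn2
  have hdpos : (0:ℝ) < ((N n : ℝ) * (m n : ℝ))⁻¹ + ((n : ℝ) ^ 2)⁻¹ := by
    have h1 : (0:ℝ) < (N n : ℝ) * (m n : ℝ) := by nlinarith
    have h2 : (0:ℝ) < (n : ℝ) ^ 2 := by nlinarith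
    positivity
  rw [Real.norm_eq_abs, abs_div, abs_of_pos hdpos, div_le_iff₀ hdpos]
  calc |mseBagged μ₂ μ₄ n (m n) (N n) - msePlain μ₂ μ₄ n
        - ((μ₄ - μ₂ ^ 2) / ((N n : ℝ) * (m n : ℝ))
          + (-2 * μ₄ + 3 * μ₂ ^ 2) / (n : ℝ) ^ 2)|
      ≤ (((N n : ℝ) * (m n : ℝ))⁻¹ + ((n : ℝ) ^ 2)⁻¹) * B n :=
        nat_bound μ₂ μ₄ n (m n) (N n) hn2 (hm n) (hN n)
    _ = B n * (((N n : ℝ) * (m n : ℝ))⁻¹ + ((n : ℝ) ^ 2)⁻¹) := mul_comm _ _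
end

section
/- Conversely, if the kurtosis satisfies κ = μ₄/μ₂² < 3/2 (i.e. −2μ₄ + 3μ₂² > 0), then for every choice of N and m, the leading-order MSE difference (1/(Nm))(μ₄ − μ₂²) + (1/n²)(−2μ₄ + 3μ₂²) is strictly positive; i.e., bagging deteriorates the variance estimation to leading order. -/
open MeasureTheory

lemma sq_integral_le_integral_pow_four
    (ν : Measure ℝ) [IsProbabilityMeasure ν]
    (hmom : MemLp (fun x : ℝ => x) 4 ν) :
    (∫ x, x ^ 2 ∂ν) ^ 2 ≤ ∫ x, x ^ 4 ∂ν := by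
  have h2 : MemLp (fun x : ℝ => x ^ 2) 2 ν := by
    have h := hmom.norm_rpow_div 2
    norm_num at h
    have h42 : (4 : ENNReal) / 2 = 2 := by
      rw [eq_comm, ENNReal.eq_div_iff (by norm_num) (by norm_num)]
      norm_num
    rwa [h42] at h
  have hi2 : Integrable (fun x : ℝ => x ^ 2) ν := h2.integrable one_le_two
  have hi4 : Integrable (fun x : ℝ => x ^ 4) ν := by
    have := h2.integrable_sq
    simpa [← pow_mul] using this
  set c := ∫ x, x ^ 2 ∂ν with hc
  have key : 0 ≤ ∫ x, (x ^ 2 - c) ^ 2 ∂ν :=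
    integral_nonneg fun x => sq_nonneg _
  have expand : ∫ x, (x ^ 2 - c) ^ 2 ∂ν
      = (∫ x, x ^ 4 ∂ν) - 2 * c * c + c ^ 2 := by
    have h1 : ∀ x : ℝ, (x ^ 2 - c) ^ 2 = x ^ 4 - 2 * c * x ^ 2 + c ^ 2 := by
      intro x; ring
    simp_rw [h1]
    have hi42 : Integrable (fun x : ℝ => x ^ 4 - 2 * c * x ^ 2) ν :=
      Integrable.sub hi4 (hi2.const_mul _)
    rw [integral_add hi42 (integrable_const _),
        integral_sub hi4 (hi2.const_mul _), MeasureTheory.integral_const_mul]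
    simp [hc]
  nlinarith [key, expand]

/-- If the kurtosis `κ = μ₄/μ₂²` is below `3/2` (i.e. `−2μ₄ + 3μ₂² > 0`), then
for every choice of `N` and `m` the leading-order MSE difference
`(1/(Nm))(μ₄ − μ₂²) + (1/n²)(−2μ₄ + 3μ₂²)` is strictly positive:
bagging deteriorates the variance estimation to leading order. -/
theorem bagging_hurts_of_kurtosis_lt
    (ν : Measure ℝ) [IsProbabilityMeasure ν]
    (hmom : MemLp (fun x : ℝ => x) 4 ν)
    (hcentered : ∫ x, x ∂ν = 0)
    (μ₂ μ₄ : ℝ) (hμ₂ : μ₂ = ∫ x, x ^ 2 ∂ν) (hμ₄ : μ₄ = ∫ x, x ^ 4 ∂ν)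
    (hμ₂pos : 0 < μ₂)
    (hkurt : μ₄ / μ₂ ^ 2 < 3 / 2) :
    ∀ n m N : ℕ, 0 < n → 0 < m → 0 < N →
      ((N : ℝ) * m)⁻¹ * (μ₄ - μ₂ ^ 2)
        + ((n : ℝ) ^ 2)⁻¹ * (-2 * μ₄ + 3 * μ₂ ^ 2) > 0 := by
  intro n m N hn hm hN
  have h1 : μ₂ ^ 2 ≤ μ₄ := by
    rw [hμ₂, hμ₄]; exact sq_integral_le_integral_pow_four ν hmom
  have h2 : 0 < -2 * μ₄ + 3 * μ₂ ^ 2 := by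
    have := (div_lt_iff₀ (by positivity)).mp hkurt
    nlinarith
  have hNm : (0:ℝ) < (N:ℝ) * m := by positivity
  have hn2 : (0:ℝ) < (n:ℝ) ^ 2 := by positivity
  have t1 : 0 ≤ ((N : ℝ) * m)⁻¹ * (μ₄ - μ₂ ^ 2) := by
    apply mul_nonneg (le_of_lt (inv_pos.mpr hNm)); linarith
  have t2 : 0 < ((n : ℝ) ^ 2)⁻¹ * (-2 * μ₄ + 3 * μ₂ ^ 2) :=
    mul_pos (inv_pos.mpr hn2) h2
  linarith
end
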